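/- arXiv:2007.09876 — 10 statements merged into one kernel-verified Lean document; each statement's English description precedes it below -/
import Mathlib

section
/- Let G be a finite group and let x act on G by a group automorphism of order 2 (i.e., a nontrivial involution). Let S = {g ∈ G : g·x = g} be the fixed-point set and T = {g ∈ G : g·x ≠ g} its complement. If T is nonempty, then S ⊆ T·T, where T·T = {g·h : g, h ∈ T}. -/
/-- Let `G` be a finite group and `φ` a group automorphism with `φ ∘ φ = id` whose set of
non-fixed points `T` is nonempty.  Then every fixed point of `φ` is a product of two
non-fixed points, i.e. `S ⊆ T·T`. -/
theorem fixed_subset_nonfixed_mul_nonfixed {G : Type*} [Group G] [Finite G] (φ : G ≃* G)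
    (hφ2 : ∀ g, φ (φ g) = g) (hT : ∃ g : G, φ g ≠ g) :
    ∀ s : G, φ s = s → ∃ t₁ t₂ : G, φ t₁ ≠ t₁ ∧ φ t₂ ≠ t₂ ∧ s = t₁ * t₂ := by
  obtain ⟨t, ht⟩ := hT
  intro s hs
  refine ⟨s * t, t⁻¹, ?_, ?_, by group⟩
  · simp only [map_mul, hs]
    intro h
    exact ht (mul_left_cancel h)
  · simp only [map_inv]
    intro h
    exact ht (inv_injective h)
end

section
/- Let G be a finite abelian group with an order-2 automorphism φ, fixed set S and complement T (both nonempty), such that T·T ⊆ S. Then there exists an element b ∈ S with b² = 1 such that φ(t) = t·b for every t ∈ T. -/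
/-- Let `G` be a finite abelian group with an order-2 automorphism `φ`, fixed set `S` and
complement `T` (both nonempty, which holds since `φ ≠ id`), such that `T·T ⊆ S`.  Then
there exists an element `b ∈ S` with `b² = 1` such that `φ(t) = t·b` for every `t ∈ T`. -/
theorem exists_translating_element {G : Type*} [CommGroup G] [Finite G] (φ : G ≃* G)
    (hφ2 : ∀ g, φ (φ g) = g) (hφ : φ ≠ MulEquiv.refl G)
    (hTT : ∀ t₁ t₂ : G, φ t₁ ≠ t₁ → φ t₂ ≠ t₂ → φ (t₁ * t₂) = t₁ * t₂) :
    ∃ b : G, φ b = b ∧ b * b = 1 ∧ ∀ t : G, φ t ≠ t → φ t = t * b := by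
  obtain ⟨t₀, ht₀⟩ : ∃ g : G, φ g ≠ g := by
    by_contra h
    push_neg at h
    exact hφ (by ext g; simp [h g])
  have h2 : φ t₀ * φ t₀ = t₀ * t₀ := by rw [← map_mul]; exact hTT t₀ t₀ ht₀ ht₀
  set b := t₀⁻¹ * φ t₀ with hb
  have hb2 : b * b = 1 := by
    have : t₀⁻¹ * φ t₀ * (t₀⁻¹ * φ t₀) = (t₀ * t₀)⁻¹ * (φ t₀ * φ t₀) := by
      rw [mul_inv]; ac_rfl
    rw [hb, this, h2, inv_mul_cancel]
  have hbinv : b⁻¹ = b := by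
    rw [inv_eq_iff_mul_eq_one, hb2]
  refine ⟨b, ?_, hb2, ?_⟩
  · have : φ b = (φ t₀)⁻¹ * t₀ := by rw [hb, map_mul, map_inv, hφ2]
    rw [this, ← hbinv, hb]
    rw [mul_inv, inv_inv, mul_comm]
  · intro t ht
    have h3 : φ t * φ t₀ = t * t₀ := by rw [← map_mul]; exact hTT t t₀ ht ht₀
    have : φ t = t * t₀ * (φ t₀)⁻¹ := by
      rw [eq_mul_inv_iff_mul_eq, h3]
    rw [this, ← hbinv, hb, mul_inv, inv_inv, mul_assoc]
end

section
/- Let G be a finite abelian group with an order-2 automorphism φ, fixed set S and complement T nonempty, such that T·T ⊆ S. Then |G| is divisible by 4. -/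
/-- Let `G` be a finite abelian group with an order-2 automorphism `φ`, fixed set `S` and
complement `T` nonempty (since `φ ≠ id`), such that `T·T ⊆ S`.  Then `4` divides `|G|`. -/
theorem four_dvd_card {G : Type*} [CommGroup G] [Finite G] (φ : G ≃* G)
    (hφ2 : ∀ g, φ (φ g) = g) (hφ : φ ≠ MulEquiv.refl G)
    (hTT : ∀ t₁ t₂ : G, φ t₁ ≠ t₁ → φ t₂ ≠ t₂ → φ (t₁ * t₂) = t₁ * t₂) :
    4 ∣ Nat.card G := by
  -- the fixed subgroup S
  set S : Subgroup G := MonoidHom.eqLocus φ.toMonoidHom (MonoidHom.id G) with hS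
  have hmemS : ∀ g : G, g ∈ S ↔ φ g = g := fun g => Iff.rfl
  -- get t₀ ∉ S
  obtain ⟨t₀, ht₀⟩ : ∃ t, φ t ≠ t := by
    by_contra h
    push_neg at h
    exact hφ (MulEquiv.ext h)
  -- index of S is 2
  have hidx : S.index = 2 := by
    rw [Subgroup.index_eq_two_iff]
    refine ⟨t₀, fun b => ?_⟩
    by_cases hb : φ b = b
    · refine Or.inr ⟨hb, fun hcon => ?_⟩
      have : φ (b * t₀) = b * t₀ := hcon
      rw [map_mul, hb] at this
      exact ht₀ (mul_left_cancel this)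
    · refine Or.inl ⟨hTT b t₀ hb ht₀, hb⟩
  have hcard : Nat.card S * 2 = Nat.card G := by
    rw [← hidx]; exact Subgroup.card_mul_index S
  -- suffices: 2 ∣ Nat.card S
  have h2 : 2 ∣ Nat.card S := by
    by_contra hodd
    have hcop : (Nat.card S).Coprime 2 := Nat.coprime_two_right.mpr
      (Nat.odd_iff.mpr (Nat.two_dvd_ne_zero.mp hodd))
    -- squaring is surjective on S
    have ht₀sq : (⟨t₀ * t₀, hTT t₀ t₀ ht₀ ht₀⟩ : S) = ⟨t₀ * t₀, hTT t₀ t₀ ht₀ ht₀⟩ := rfl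
    obtain ⟨s, hs⟩ := (powCoprime (n := 2) hcop).surjective ⟨t₀ * t₀, hTT t₀ t₀ ht₀ ht₀⟩
    have hs2 : (s : G) ^ 2 = t₀ * t₀ := congrArg Subtype.val hs
    have hsfix : φ (s : G) = s := s.2
    set u : G := t₀ * (s : G)⁻¹ with hu
    have hufix : φ u ≠ u := by
      intro h
      rw [hu, map_mul, map_inv, hsfix] at h
      exact ht₀ (mul_right_cancel h)
    have hs2' : (s : G) * (s : G) = t₀ * t₀ := by rw [← pow_two]; exact hs2
    have hu2 : u * u = 1 := by
      rw [hu, mul_mul_mul_comm, ← mul_inv, hs2', mul_inv_cancel]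
    -- v = u * φ u is fixed and has square 1
    have hvfix : φ (u * φ u) = u * φ u := by
      rw [map_mul, hφ2 u, mul_comm]
    have hv2 : (u * φ u) * (u * φ u) = 1 := by
      rw [mul_mul_mul_comm, ← map_mul, hu2, map_one, mul_one]
    set v : S := ⟨u * φ u, hvfix⟩ with hv
    have hvsq : v * v = 1 := Subtype.ext hv2
    have hord : orderOf v ∣ 2 := orderOf_dvd_of_pow_eq_one (by rw [pow_two]; exact hvsq)
    have hordcard : orderOf v ∣ Nat.card S := orderOf_dvd_natCard v
    have : orderOf v = 1 := Nat.eq_one_of_dvd_coprimes hcop.symm hord hordcard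
    have hv1 : v = 1 := orderOf_eq_one_iff.mp this
    have : u * φ u = 1 := congrArg Subtype.val hv1
    have h1 : φ u = u⁻¹ := eq_inv_of_mul_eq_one_right this
    have h2 : u = u⁻¹ := eq_inv_of_mul_eq_one_left hu2
    exact hufix (h1.trans h2.symm)
  obtain ⟨k, hk⟩ := h2
  exact ⟨k, by omega⟩
end

section
/- With G = ⟨a,b | a^{2n}=b²=1, ab=ba⟩, σ and τ as in the data of K(8n,σ,τ) (σ invariant under the automorphism a ↦ ab, b ↦ b; τ a unital 2-cocycle with σ(gh)σ(g)^{-1}σ(h)^{-1} = τ(g,h)τ(g◁x,h◁x)), define P_i = ∏_{k=1}^{i-1} τ(a, a^k) for i ≥ 2 and P_0 = P_1 = 1. Then for all i, j ≥ 0: P_{2j}^{2i} / P_{2i}^{2j} = σ(a^{2j})^i / σ(a^{2i})^j. -/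
/-- The group `G = Z_{2n} × Z_2`, written additively. -/
abbrev GK (n : ℕ) := ZMod (2 * n) × ZMod 2

/-- The generator `a` of order `2n`. -/
def aK (n : ℕ) : GK n := (1, 0)

/-- The generator `b` of order `2`. -/
def bK (n : ℕ) : GK n := (0, 1)

/-- The order-2 automorphism `◁x` of `G` determined by `a ↦ ab`, `b ↦ b`. -/
def xK (n : ℕ) : GK n → GK n :=
  fun g => (g.1, g.2 + ZMod.castHom (dvd_mul_right 2 n) (ZMod 2) g.1)

/-- `P i = ∏_{m=1}^{i-1} τ(a, a^m)`, with `P 0 = P 1 = 1`. -/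
def PK {k : Type*} [Field k] (n : ℕ) (τ : GK n → GK n → kˣ) (i : ℕ) : kˣ :=
  ∏ m ∈ Finset.Icc 1 (i - 1), τ (aK n) (m • aK n)

lemma PK_succ' {k : Type*} [Field k] (n : ℕ) (τ : GK n → GK n → kˣ)
    (hτ1 : ∀ g : GK n, τ g 0 = 1) (i : ℕ) :
    PK n τ (i+1) = PK n τ i * τ (aK n) (i • aK n) := by
  cases i with
  | zero => simp [PK, hτ1]
  | succ m =>
    unfold PK
    rw [Nat.add_sub_cancel, Nat.add_sub_cancel, Finset.prod_Icc_succ_top (by omega)]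

lemma xK_even' (n m : ℕ) : xK n ((2 * m) • aK n) = (2 * m) • aK n := by
  have h2 : (ZMod.castHom (dvd_mul_right 2 n) (ZMod 2)) ((2 * m : ℕ) : ZMod (2*n)) = 0 := by
    rw [map_natCast, Nat.cast_mul, ZMod.natCast_self, zero_mul]
  simp only [xK, aK, Prod.smul_mk, smul_zero, nsmul_eq_mul, mul_one]
  rw [Prod.ext_iff]
  refine ⟨rfl, ?_⟩
  show 0 + _ = 0
  rw [zero_add, h2]

lemma keyQ' {k : Type*} [Field k] (n : ℕ) (τ : GK n → GK n → kˣ)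
    (hcoc : ∀ g h l : GK n, τ g h * τ (g + h) l = τ h l * τ g (h + l))
    (hτ1 : ∀ g : GK n, τ g 0 = 1) (hτ1' : ∀ g : GK n, τ 0 g = 1) :
    ∀ i j : ℕ, τ (i • aK n) (j • aK n) * PK n τ i * PK n τ j = PK n τ (i + j) := by
  intro i
  induction i with
  | zero => intro j; simp [PK, hτ1']
  | succ m ih =>
    intro j
    have h1 := hcoc (aK n) (m • aK n) (j • aK n)
    rw [show aK n + m • aK n = (m+1) • aK n by rw [add_comm, succ_nsmul],
        show m • aK n + j • aK n = (m+j) • aK n by rw [add_nsmul]] at h1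
    rw [PK_succ' n τ hτ1, show m + 1 + j = (m + j) + 1 by omega, PK_succ' n τ hτ1]
    have h1' := congrArg Units.val h1
    have h2' := congrArg Units.val (ih j)
    simp only [Units.val_mul] at h1' h2'
    rw [Units.ext_iff]
    simp only [Units.val_mul]
    linear_combination (↑(PK n τ m) * ↑(PK n τ j) : k) * h1' +
      (↑(τ (aK n) ((m + j) • aK n)) : k) * h2'

lemma claimS' {k : Type*} [Field k] (n : ℕ) (τ : GK n → GK n → kˣ) (σ : GK n → kˣ)
    (hcoc : ∀ g h l : GK n, τ g h * τ (g + h) l = τ h l * τ g (h + l))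
    (hτ1 : ∀ g : GK n, τ g 0 = 1) (hτ1' : ∀ g : GK n, τ 0 g = 1)
    (hσ1 : σ 0 = 1)
    (hcompat : ∀ g h : GK n,
      σ (g + h) * (σ g)⁻¹ * (σ h)⁻¹ = τ g h * τ (xK n g) (xK n h)) :
    ∀ m : ℕ, σ ((2*m) • aK n) * (PK n τ 2)^(2*m)
      = (σ ((2*1) • aK n))^m * (PK n τ (2*m))^2 := by
  intro m
  induction m with
  | zero => simp [PK, hσ1]
  | succ m ih =>
    have hc := hcompat ((2*m) • aK n) ((2*1) • aK n)
    rw [xK_even', xK_even',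
      show (2*m) • aK n + (2*1) • aK n = (2*(m+1)) • aK n by
        rw [← add_nsmul]; ring_nf] at hc
    rw [mul_inv_eq_iff_eq_mul, mul_inv_eq_iff_eq_mul] at hc
    have hq := keyQ' n τ hcoc hτ1 hτ1' (2*m) (2*1)
    rw [show 2*m + 2*1 = 2*(m+1) by ring] at hq
    have hc' := congrArg Units.val hc
    have hq' := congrArg Units.val hq
    have ih' := congrArg Units.val ih
    simp only [Units.val_mul, Units.val_pow_eq_pow_val] at hc' hq' ih'
    rw [Units.ext_iff]
    simp only [Units.val_mul, Units.val_pow_eq_pow_val]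
    set S1 : k := (σ ((2*1) • aK n) : k)
    set Sm : k := (σ ((2*m) • aK n) : k)
    set Sm1 : k := (σ ((2*(m+1)) • aK n) : k)
    set t : k := (τ ((2*m) • aK n) ((2*1) • aK n) : k)
    set P2 : k := (PK n τ 2 : k)
    set Pm : k := (PK n τ (2*m) : k)
    set Pm1 : k := (PK n τ (2*(m+1)) : k)
    rw [show 2*(m+1) = 2*m + 2 from by ring, pow_add, pow_succ S1]
    linear_combination (P2^(2*m) * P2^2) * hc' + (t*t*S1*P2^2) * ih' +
      (S1^m * S1 * (t*Pm*P2 + Pm1)) * hq'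

/-- With the data of `K(8n,σ,τ)`, for all `i, j ≥ 0`:
`P_{2j}^{2i} / P_{2i}^{2j} = σ(a^{2j})^i / σ(a^{2i})^j`. -/
theorem P_even_ratio {k : Type*} [Field k] (n : ℕ) (hn : 0 < n)
    (τ : GK n → GK n → kˣ) (σ : GK n → kˣ)
    (hcoc : ∀ g h l : GK n, τ g h * τ (g + h) l = τ h l * τ g (h + l))
    (hτ1 : ∀ g : GK n, τ g 0 = 1) (hτ1' : ∀ g : GK n, τ 0 g = 1)
    (hσ1 : σ 0 = 1) (hσx : ∀ g : GK n, σ (xK n g) = σ g)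
    (hcompat : ∀ g h : GK n,
      σ (g + h) * (σ g)⁻¹ * (σ h)⁻¹ = τ g h * τ (xK n g) (xK n h)) :
    ∀ i j : ℕ,
      PK n τ (2 * j) ^ (2 * i) * (PK n τ (2 * i) ^ (2 * j))⁻¹ =
        σ ((2 * j) • aK n) ^ i * (σ ((2 * i) • aK n) ^ j)⁻¹ := by
  intro i j
  have hA := congrArg (fun u : kˣ => (u : k) ^ j)
    (claimS' n τ σ hcoc hτ1 hτ1' hσ1 hcompat i)
  have hB := congrArg (fun u : kˣ => (u : k) ^ i)
    (claimS' n τ σ hcoc hτ1 hτ1' hσ1 hcompat j)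
  simp only [Units.val_mul, Units.val_pow_eq_pow_val, mul_pow, ← pow_mul] at hA hB
  rw [Units.ext_iff]
  simp only [Units.val_mul, Units.val_pow_eq_pow_val, Units.val_inv_eq_inv_val]
  set Si : k := (σ ((2*i) • aK n) : k)
  set Sj : k := (σ ((2*j) • aK n) : k)
  set S1 : k := (σ ((2*1) • aK n) : k)
  set Pi : k := (PK n τ (2*i) : k)
  set Pj : k := (PK n τ (2*j) : k)
  set P2 : k := (PK n τ 2 : k)
  have h1 : Pi ^ (2*j) ≠ 0 := pow_ne_zero _ (Units.ne_zero _)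
  have h2 : Si ^ j ≠ 0 := pow_ne_zero _ (Units.ne_zero _)
  have h3 : P2 ≠ 0 := Units.ne_zero _
  field_simp
  apply mul_right_cancel₀ (pow_ne_zero (2*i*j) h3)
  linear_combination Pj^(2*i) * hA - Pi^(2*j) * hB
end

section
/- With the data of K(8n,σ,τ), define h(t₁,t₂) = τ(t₁,t₂)/τ(t₂◁x, t₁◁x) for t₁, t₂ in the set T of non-fixed points of ◁x. Then h(t₁,t₂)·h(t₁◁x, t₂◁x) = 1 and h(t₁,t₂) = h(t₂,t₁) for all t₁, t₂ ∈ T. -/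
/-- `h(t₁,t₂) = τ(t₁,t₂)/τ(t₂◁x, t₁◁x)` for `t₁, t₂` in the set `T` of non-fixed points. -/
def hK {k : Type*} [Field k] (n : ℕ) (τ : GK n → GK n → kˣ) (t₁ t₂ : GK n) : kˣ :=
  τ t₁ t₂ * (τ (xK n t₂) (xK n t₁))⁻¹


lemma xK_xK (n : ℕ) (g : GK n) : xK n (xK n g) = g := by
  have h2 : ∀ c : ZMod 2, c + c = 0 := by decide
  simp [xK, add_assoc, h2]

lemma xK_add (n : ℕ) (g h : GK n) : xK n (g + h) = xK n g + xK n h := by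
  simp [xK, Prod.add_def, map_add]
  ring

/-- With the data of `K(8n,σ,τ)`, for `t₁, t₂ ∈ T = {g : g◁x ≠ g}` one has
`h(t₁,t₂)·h(t₁◁x, t₂◁x) = 1` and `h(t₁,t₂) = h(t₂,t₁)`. -/
theorem hK_symm {k : Type*} [Field k] (n : ℕ) (hn : 0 < n)
    (τ : GK n → GK n → kˣ) (σ : GK n → kˣ)
    (hcoc : ∀ g h l : GK n, τ g h * τ (g + h) l = τ h l * τ g (h + l))
    (hτ1 : ∀ g : GK n, τ g 0 = 1) (hτ1' : ∀ g : GK n, τ 0 g = 1)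
    (hσ1 : σ 0 = 1) (hσx : ∀ g : GK n, σ (xK n g) = σ g)
    (hcompat : ∀ g h : GK n,
      σ (g + h) * (σ g)⁻¹ * (σ h)⁻¹ = τ g h * τ (xK n g) (xK n h)) :
    ∀ t₁ t₂ : GK n, xK n t₁ ≠ t₁ → xK n t₂ ≠ t₂ →
      hK n τ t₁ t₂ * hK n τ (xK n t₁) (xK n t₂) = 1 ∧
        hK n τ t₁ t₂ = hK n τ t₂ t₁ := by
  intro t₁ t₂ _ _
  have key : τ t₁ t₂ * τ (xK n t₁) (xK n t₂) = τ t₂ t₁ * τ (xK n t₂) (xK n t₁) := by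
    rw [← hcompat, ← hcompat, add_comm t₂ t₁, mul_right_comm]
  constructor
  · rw [hK, hK, xK_xK, xK_xK, mul_mul_mul_comm, key]; group
  · rw [hK, hK, mul_inv_eq_iff_eq_mul, mul_assoc, mul_comm ((τ (xK n t₁) (xK n t₂))⁻¹),
      ← mul_assoc, ← key, mul_assoc, mul_inv_cancel, mul_one]
end

section
/- With the data of K(8n,σ,τ), assume additionally that the bicharacter η(g,h) = τ(g,h)τ(h,g)^{-1} satisfies η(a,b) = -1. Then for all i ≥ 0, h(a, a^{2i+1}b) = τ(b,a)/τ(b, a^{2i+1}), where h(t₁,t₂) = τ(t₁,t₂)/τ(t₂◁x, t₁◁x). -/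
/-- The antisymmetrization `η(g,h) = τ(g,h)τ(h,g)⁻¹` of a 2-cocycle on an abelian
group is multiplicative in the first argument. -/
theorem eta_add_left' {k : Type*} [Field k] {G : Type*} [AddCommGroup G] (τ : G → G → kˣ)
    (hcoc : ∀ g h l : G, τ g h * τ (g + h) l = τ h l * τ g (h + l))
    (g h l : G) :
    τ (g+h) l * (τ l (g+h))⁻¹ = (τ g l * (τ l g)⁻¹) * (τ h l * (τ l h)⁻¹) := by
  have e1 : τ (g+h) l = (τ g h)⁻¹ * (τ h l * τ g (h+l)) :=
    eq_inv_mul_iff_mul_eq.mpr (hcoc g h l)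
  have e2 : τ l (g+h) = (τ g h)⁻¹ * (τ l g * τ (g+l) h) := by
    rw [eq_inv_mul_iff_mul_eq, ← hcoc l g h, add_comm l g]
  have e3 : τ (g+l) h = (τ g l)⁻¹ * (τ l h * τ g (h+l)) := by
    rw [eq_inv_mul_iff_mul_eq, hcoc g l h, add_comm l h]
  rw [e1, e2, e3, Units.ext_iff]
  push_cast
  field_simp

/-- `η(m•g, l) = η(g,l)^m`. -/
theorem eta_nsmul' {k : Type*} [Field k] {G : Type*} [AddCommGroup G] (τ : G → G → kˣ)
    (hcoc : ∀ g h l : G, τ g h * τ (g + h) l = τ h l * τ g (h + l))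
    (hτ1 : ∀ g : G, τ g 0 = 1) (hτ1' : ∀ g : G, τ 0 g = 1)
    (g l : G) : ∀ m : ℕ,
    τ (m • g) l * (τ l (m • g))⁻¹ = (τ g l * (τ l g)⁻¹)^m := by
  intro m
  induction m with
  | zero => simp [hτ1, hτ1']
  | succ m ih =>
      rw [succ_nsmul, eta_add_left' τ hcoc, ih, pow_succ]

/-- With the data of `K(8n,σ,τ)` and `η(a,b) = η(b,a) = -1` (where
`η(g,h) = τ(g,h)τ(h,g)⁻¹`), for all `i ≥ 0`:
`h(a, a^{2i+1}b) = τ(b,a)/τ(b, a^{2i+1})`. -/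
theorem hK_a_odd_b {k : Type*} [Field k] (n : ℕ) (hn : 0 < n)
    (τ : GK n → GK n → kˣ)
    (hcoc : ∀ g h l : GK n, τ g h * τ (g + h) l = τ h l * τ g (h + l))
    (hτ1 : ∀ g : GK n, τ g 0 = 1) (hτ1' : ∀ g : GK n, τ 0 g = 1)
    (hηab : τ (aK n) (bK n) * (τ (bK n) (aK n))⁻¹ = -1)
    (hηba : τ (bK n) (aK n) * (τ (aK n) (bK n))⁻¹ = -1) :
    ∀ i : ℕ,
      hK n τ (aK n) ((2 * i + 1) • aK n + bK n) =
        τ (bK n) (aK n) * (τ (bK n) ((2 * i + 1) • aK n))⁻¹ := by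
  intro i
  set a := aK n
  set b := bK n
  set A := (2 * i + 1) • aK n with hAdef
  -- group-element computations
  have hx1 : xK n a = a + b := by
    have c1 : ZMod.castHom (dvd_mul_right 2 n) (ZMod 2) (1 : ZMod (2*n)) = 1 := map_one _
    simp [xK, a, b, aK, bK, Prod.ext_iff, c1, -ZMod.castHom_apply]
  have c1 : ZMod.castHom (dvd_mul_right 2 n) (ZMod 2) (((2*i+1 : ℕ) : ZMod (2*n))) = 1 := by
    rw [map_natCast]
    push_cast
    rw [show (2:ZMod 2) = 0 by decide]
    ring
  have hA : A = (((2*i+1 : ℕ) : ZMod (2*n)), 0) := by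
    simp [hAdef, aK, Prod.smul_def, nsmul_eq_mul]
  have hx2 : xK n (A + b) = A := by
    rw [hA]
    show (_, (0:ZMod 2) + 1 + ZMod.castHom (dvd_mul_right 2 n) (ZMod 2) _) = _
    rw [Prod.ext_iff]
    refine ⟨by simp [b, bK], ?_⟩
    show (0:ZMod 2) + 1 +
        ZMod.castHom (dvd_mul_right 2 n) (ZMod 2) (((2*i+1 : ℕ) : ZMod (2*n)) + (bK n).1) = 0
    rw [show (bK n).1 = 0 from rfl, add_zero, c1]
    decide
  -- η computations
  have hetaAb : τ A b * (τ b A)⁻¹ = -1 := by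
    rw [hAdef, eta_nsmul' τ hcoc hτ1 hτ1', hηab, Odd.neg_one_pow ⟨i, by omega⟩]
  have hetaAa : τ A a * (τ a A)⁻¹ = 1 := by
    rw [hAdef, eta_nsmul' τ hcoc hτ1 hτ1', mul_inv_cancel, one_pow]
  have haA : τ A a = τ a A := mul_inv_eq_one.mp hetaAa
  have hAb : τ A b = -(τ b A) := by
    rw [mul_inv_eq_iff_eq_mul] at hetaAb
    rw [hetaAb, neg_one_mul]
  have hab : τ a b = -(τ b a) := by
    rw [mul_inv_eq_iff_eq_mul] at hηab
    rw [hηab, neg_one_mul]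
  -- cocycle instances
  have e1 : τ a (A+b) = (τ A b)⁻¹ * (τ a A * τ (A+a) b) := by
    rw [eq_inv_mul_iff_mul_eq, ← hcoc a A b, add_comm a A]
  have e2 : τ A (a+b) = (τ a b)⁻¹ * (τ A a * τ (A+a) b) := by
    rw [eq_inv_mul_iff_mul_eq, ← hcoc A a b]
  simp only [hK, hx1, hx2]
  rw [e1, e2, haA, hAb, hab, Units.ext_iff]
  have hba : ((τ b A : kˣ) : k) ≠ 0 := Units.ne_zero _
  push_cast
  field_simp
end

section
/- With the data of K(8n,σ,τ) with η(a,b) = -1, if α, β ∈ k^× satisfy β²/α² = τ(b,b)/τ(b,a)², then for all i ≥ 0: (τ(b,a)β / (τ(b,a^{2i})α))² = σ(a^{2i}) / σ(a^{2i}b). -/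
/-- With the data of `K(8n,σ,τ)`, if `α, β ∈ kˣ` satisfy `β²/α² = τ(b,b)/τ(b,a)²`,
then for all `i ≥ 0`: `(τ(b,a)β / (τ(b,a^{2i})α))² = σ(a^{2i}) / σ(a^{2i}b)`. -/
theorem tau_sigma_square_relation {k : Type*} [Field k] (n : ℕ) (hn : 0 < n)
    (τ : GK n → GK n → kˣ) (σ : GK n → kˣ) (α β : kˣ)
    (hcoc : ∀ g h l : GK n, τ g h * τ (g + h) l = τ h l * τ g (h + l))
    (hτ1 : ∀ g : GK n, τ g 0 = 1) (hτ1' : ∀ g : GK n, τ 0 g = 1)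
    (hσ1 : σ 0 = 1) (hσx : ∀ g : GK n, σ (xK n g) = σ g)
    (hcompat : ∀ g h : GK n,
      σ (g + h) * (σ g)⁻¹ * (σ h)⁻¹ = τ g h * τ (xK n g) (xK n h))
    (hαβ : β ^ 2 * (α ^ 2)⁻¹ = τ (bK n) (bK n) * (τ (bK n) (aK n) ^ 2)⁻¹) :
    ∀ i : ℕ,
      (τ (bK n) (aK n) * β * (τ (bK n) ((2 * i) • aK n) * α)⁻¹) ^ 2 =
        σ ((2 * i) • aK n) * (σ ((2 * i) • aK n + bK n))⁻¹ := by
  intro i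
  set a := aK n with ha
  set b := bK n with hb
  set c := (2 * i) • aK n with hc
  -- basic facts about xK
  have hxb : xK n b = b := by simp [xK, hb, bK]
  have hxa : xK n a = a + b := by
    simp only [xK, ha, hb, aK, bK, Prod.mk_add_mk, add_zero, zero_add, map_one, Prod.mk.injEq]
  have hxc : xK n c = c := by
    have h : c = (((2*i : ℕ) : ZMod (2*n)), 0) := by simp [hc, aK, Prod.smul_def]
    rw [h]
    unfold xK
    rw [Prod.mk.injEq]
    refine ⟨rfl, ?_⟩
    rw [zero_add, map_natCast]
    exact (ZMod.natCast_eq_zero_iff _ _).mpr ⟨i, rfl⟩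
  have hbb0 : b + b = 0 := by
    simp only [hb, bK, Prod.mk_add_mk, add_zero]
    norm_num
    decide
  -- compat at (b, a)
  have h1 := hcompat b a
  rw [hxb, hxa] at h1
  have hσab : σ (b + a) = σ a := by rw [add_comm, ← hxa, hσx]
  rw [hσab] at h1
  -- cocycle at (b, b, a)
  have h2 := hcoc b b a
  rw [hbb0, hτ1' a, mul_one, add_comm b a] at h2
  -- τ b b = (σ b)⁻¹
  have hbbu : τ b b = (σ b)⁻¹ := by
    rw [h2, ← h1, mul_comm (σ a), mul_assoc, mul_inv_cancel, mul_one]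
  -- compat at (b, c)
  have h3 := hcompat b c
  rw [hxb, hxc] at h3
  -- finish in k
  have hcb : σ (c + b) = σ (b + c) := by rw [add_comm]
  rw [hcb, Units.ext_iff]
  have hαβ' := congrArg Units.val hαβ
  have h3' := congrArg Units.val h3
  have hbbu' := congrArg Units.val hbbu
  simp only [Units.val_mul, Units.val_pow_eq_pow_val, Units.val_inv_eq_inv_val] at hαβ' h3' hbbu' ⊢
  have nta := (τ b a).ne_zero
  have ntc := (τ b c).ne_zero
  have nsb := (σ b).ne_zero
  have nsc := (σ c).ne_zero
  have nsbc := (σ (b + c)).ne_zero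
  have nα := α.ne_zero
  have nβ := β.ne_zero
  field_simp at hαβ' h3' hbbu' ⊢
  linear_combination ((τ b a : k)^2 * (β:k)^2) * h3' + ((τ b c : k)^2 * (σ b : k) * (σ c : k)) * hαβ' + ((α:k)^2 * (τ b c : k)^2 * (σ c : k)) * hbbu'
end

section
/- Let H = k^G #_{σ,τ} kZ₂ with fixed set S and non-fixed set T of the action ◁x, and suppose R = Σ w¹(g,h) e_g⊗e_h + Σ w²(g,h) e_g x⊗e_h + Σ w³(g,h) e_g⊗e_h x + Σ w⁴(g,h) e_g x⊗e_h x satisfies Δ(e_g)R = RΔ(e_g) for all g ∈ G. Then w²(t,g) = 0 for all t ∈ T, g ∈ G; w³(g,t) = 0 for all t ∈ T, g ∈ G; and w⁴(s,t) = w⁴(t,s) = 0 for all s ∈ S, t ∈ T. -/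
/-
The Hopf algebra `H = k^G #_{σ,τ} kZ₂` has basis `{e_g, e_g x}_{g ∈ G}`, indexed by
`G × Bool` (`(g, false) ↔ e_g`, `(g, true) ↔ e_g x`).  Multiplication:
`e_g e_h = δ_{g,h} e_g`, `e_g (e_h x) = δ_{g,h} e_h x`, `(e_g x) e_h = δ_{g,h◁x} e_g x`,
`(e_g x)(e_h x) = δ_{g,h◁x} σ(g) e_g`.  Elements of `H ⊗ H` are functions
`(G × Bool) × (G × Bool) → k`.
-/

/-- Structure constants of the multiplication of `H`: the coefficient of the basis
element `v` in the product of basis elements `u · w`. -/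
def mcK {k G : Type*} [Field k] [DecidableEq G] (φ : G → G) (σ : G → kˣ)
    (u w v : G × Bool) : k :=
  match u.2, w.2 with
  | false, false => if u.1 = w.1 ∧ v = u then 1 else 0
  | false, true  => if u.1 = w.1 ∧ v = w then 1 else 0
  | true,  false => if u.1 = φ w.1 ∧ v = u then 1 else 0
  | true,  true  => if u.1 = φ w.1 ∧ v = (u.1, false) then (σ u.1 : k) else 0

/-- Multiplication on `H ⊗ H`. -/
def mul2K {k G : Type*} [Field k] [Fintype G] [DecidableEq G] (φ : G → G) (σ : G → kˣ)
    (F F' : (G × Bool) × (G × Bool) → k) : (G × Bool) × (G × Bool) → k :=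
  fun v => ∑ u : (G × Bool) × (G × Bool), ∑ w : (G × Bool) × (G × Bool),
    mcK φ σ u.1 w.1 v.1 * mcK φ σ u.2 w.2 v.2 * F u * F' w

/-- `Δ(e_g) = ∑_{hk=g} e_h ⊗ e_k` as an element of `H ⊗ H`. -/
def DeltaE {k G : Type*} [Field k] [CommGroup G] [DecidableEq G] (g : G) :
    (G × Bool) × (G × Bool) → k :=
  fun p => if p.1.2 = false ∧ p.2.2 = false ∧ p.1.1 * p.2.1 = g then 1 else 0

/-- The element `R = ∑ w¹(g,h) e_g⊗e_h + ∑ w²(g,h) e_g x⊗e_h + ∑ w³(g,h) e_g⊗e_h x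
+ ∑ w⁴(g,h) e_g x⊗e_h x` of `H ⊗ H`. -/
def Rmat {k G : Type*} [Field k] (w1 w2 w3 w4 : G → G → k) :
    (G × Bool) × (G × Bool) → k :=
  fun p => match p.1.2, p.2.2 with
  | false, false => w1 p.1.1 p.2.1
  | true,  false => w2 p.1.1 p.2.1
  | false, true  => w3 p.1.1 p.2.1
  | true,  true  => w4 p.1.1 p.2.1

lemma left_eval {k G : Type*} [Field k] [CommGroup G] [Fintype G] [DecidableEq G]
    (φ : G → G) (σ : G → kˣ) (F : (G × Bool) × (G × Bool) → k) (g : G)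
    (v : (G × Bool) × (G × Bool)) :
    mul2K φ σ (DeltaE g) F v = if v.1.1 * v.2.1 = g then F v else 0 := by
  obtain ⟨⟨a, ba⟩, ⟨b, bb⟩⟩ := v
  simp only [mul2K, DeltaE, mcK, Fintype.sum_prod_type, Fintype.sum_bool,
    mul_ite, ite_mul, zero_mul, mul_zero, one_mul, mul_one, if_false, if_true]
  cases ba <;> cases bb <;>
  · simp only [ite_and, Finset.sum_ite_eq, Finset.sum_ite_eq', Prod.ext_iff, eq_comm,
      Finset.mem_univ, if_true, and_true, and_false, if_false, true_and, false_and,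
      Finset.sum_const_zero, add_zero, zero_add, mul_one, one_mul, mul_zero, zero_mul]
    simp [ite_and, Finset.sum_ite_eq, Finset.sum_ite_eq', Prod.ext_iff, eq_comm]
    rw [Finset.sum_eq_single a (fun c _ hc => by simp [Ne.symm hc]) (by simp),
      Finset.sum_eq_single b (fun c _ hc => by simp [Ne.symm hc]) (by simp)]
    simp

lemma right_eval {k G : Type*} [Field k] [CommGroup G] [Fintype G] [DecidableEq G]
    (φ : G → G) (hinv : ∀ g : G, φ (φ g) = g) (σ : G → kˣ)
    (F : (G × Bool) × (G × Bool) → k) (g : G) (v : (G × Bool) × (G × Bool)) :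
    mul2K φ σ F (DeltaE g) v =
      if (bif v.1.2 then φ v.1.1 else v.1.1) * (bif v.2.2 then φ v.2.1 else v.2.1) = g
      then F v else 0 := by
  have hφ : ∀ x y : G, x = φ y ↔ φ x = y := by
    intro x y
    constructor
    · rintro rfl; exact hinv y
    · rintro rfl; exact (hinv x).symm
  obtain ⟨⟨a, ba⟩, ⟨b, bb⟩⟩ := v
  simp only [mul2K, DeltaE, mcK, Fintype.sum_prod_type, Fintype.sum_bool,
    mul_ite, ite_mul, zero_mul, mul_zero, one_mul, mul_one, if_false, if_true]
  cases ba <;> cases bb <;>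
    (simp only [hφ]
     simp [ite_and, Finset.sum_ite_eq, Finset.sum_ite_eq', Prod.ext_iff, eq_comm])
  · rw [Finset.sum_eq_single a (fun c _ hc => by simp [hc, Ne.symm hc]) (by simp),
      Finset.sum_eq_single b (fun c _ hc => by simp [hc, Ne.symm hc]) (by simp),
      Finset.sum_eq_single a (fun c _ hc => by simp [hc, Ne.symm hc]) (by simp),
      Finset.sum_eq_single b (fun c _ hc => by simp [hc, Ne.symm hc]) (by simp)]
    simp
  · rw [Finset.sum_eq_single a (fun c _ hc => by simp [hc, Ne.symm hc]) (by simp),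
      Finset.sum_eq_single b (fun c _ hc => by simp [hc, Ne.symm hc]) (by simp),
      Finset.sum_eq_single a (fun c _ hc => by simp [hc, Ne.symm hc]) (by simp),
      Finset.sum_eq_single (φ b) (fun c _ hc => by simp [hc, Ne.symm hc]) (by simp)]
    simp
  · rw [Finset.sum_eq_single a (fun c _ hc => by simp [hc, Ne.symm hc]) (by simp),
      Finset.sum_eq_single b (fun c _ hc => by simp [hc, Ne.symm hc]) (by simp),
      Finset.sum_eq_single (φ a) (fun c _ hc => by simp [hc, Ne.symm hc]) (by simp),
      Finset.sum_eq_single b (fun c _ hc => by simp [hc, Ne.symm hc]) (by simp)]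
    simp
  · rw [Finset.sum_eq_single a (fun c _ hc => by simp [hc, Ne.symm hc]) (by simp),
      Finset.sum_eq_single b (fun c _ hc => by simp [hc, Ne.symm hc]) (by simp),
      Finset.sum_eq_single (φ a) (fun c _ hc => by simp [hc, Ne.symm hc]) (by simp),
      Finset.sum_eq_single (φ b) (fun c _ hc => by simp [hc, Ne.symm hc]) (by simp)]
    simp


/-- If `R` commutes with all `Δ(e_g)`, then `w²(t,g) = 0` and `w³(g,t) = 0` for all
non-fixed `t` and all `g`, and `w⁴(s,t) = w⁴(t,s) = 0` for fixed `s` and non-fixed `t`. -/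
theorem R_coefficient_vanishing {k G : Type*} [Field k] [CommGroup G] [Fintype G]
    [DecidableEq G] (φ : G → G)
    (hhom : ∀ g h : G, φ (g * h) = φ g * φ h) (hinv : ∀ g : G, φ (φ g) = g)
    (σ : G → kˣ) (w1 w2 w3 w4 : G → G → k)
    (hcomm : ∀ g : G,
      mul2K φ σ (DeltaE g) (Rmat w1 w2 w3 w4) =
        mul2K φ σ (Rmat w1 w2 w3 w4) (DeltaE g)) :
    (∀ t g : G, φ t ≠ t → w2 t g = 0) ∧
    (∀ g t : G, φ t ≠ t → w3 g t = 0) ∧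
    (∀ s t : G, φ s = s → φ t ≠ t → w4 s t = 0 ∧ w4 t s = 0) := by
  have key : ∀ (g : G) (v : (G × Bool) × (G × Bool)),
      (if v.1.1 * v.2.1 = g then Rmat w1 w2 w3 w4 v else 0) =
      (if (bif v.1.2 then φ v.1.1 else v.1.1) * (bif v.2.2 then φ v.2.1 else v.2.1) = g
        then Rmat w1 w2 w3 w4 v else 0) := by
    intro g v
    rw [← left_eval φ σ _ g v, ← right_eval φ hinv σ _ g v, hcomm]
  refine ⟨?_, ?_, ?_⟩
  · intro t g ht
    have h := key (φ t * g) ((t, true), (g, false))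
    simpa [Rmat, mul_left_inj, Ne.symm ht] using h.symm
  · intro g t ht
    have h := key (g * φ t) ((g, false), (t, true))
    simpa [Rmat, mul_right_inj, Ne.symm ht] using h.symm
  · intro s t hs ht
    constructor
    · have h := key (φ s * φ t) ((s, true), (t, true))
      simpa [Rmat, hs, mul_right_inj, Ne.symm ht] using h.symm
    · have h := key (φ t * φ s) ((t, true), (s, true))
      simpa [Rmat, hs, mul_left_inj, Ne.symm ht] using h.symm
end

section
/- Let H = k^G #_{σ,τ} kZ₂ with |G| odd. Then every quasitriangular structure (universal R-matrix) R on H is of trivial form, i.e., R = Σ_{g,h∈G} w(g,h) e_g ⊗ e_h for some function w : G×G → k. -/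
/-- Coefficient of `e_u ⊗ e_w` in `Δ` of the basis element indexed by `v`. -/
def Dcoef {k G : Type*} [Field k] [CommGroup G] [DecidableEq G]
    (τ : G → G → kˣ) (v u w : G × Bool) : k :=
  if v.2 then
    (if u.2 = true ∧ w.2 = true ∧ u.1 * w.1 = v.1 then (τ u.1 w.1 : k) else 0)
  else
    (if u.2 = false ∧ w.2 = false ∧ u.1 * w.1 = v.1 then 1 else 0)

/-- Multiplication on `H ⊗ H ⊗ H`. -/
def mul3K {k G : Type*} [Field k] [Fintype G] [DecidableEq G] (φ : G → G) (σ : G → kˣ)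
    (F F' : (G × Bool) × (G × Bool) × (G × Bool) → k) :
    (G × Bool) × (G × Bool) × (G × Bool) → k :=
  fun v => ∑ u : (G × Bool) × (G × Bool) × (G × Bool),
    ∑ w : (G × Bool) × (G × Bool) × (G × Bool),
      mcK φ σ u.1 w.1 v.1 * mcK φ σ u.2.1 w.2.1 v.2.1 * mcK φ σ u.2.2 w.2.2 v.2.2 *
        F u * F' w

/-- The unit `1 = ∑_g e_g` of `H`. -/
def oneHK {k G : Type*} [Field k] : G × Bool → k :=
  fun v => if v.2 = false then 1 else 0

/-- The unit of `H ⊗ H`. -/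
def one2K {k G : Type*} [Field k] : (G × Bool) × (G × Bool) → k :=
  fun p => (oneHK p.1 : k) * (oneHK p.2 : k)

/-- The comultiplication `Δ : H → H ⊗ H` as a linear map on coefficients. -/
def DeltaMap {k G : Type*} [Field k] [CommGroup G] [Fintype G] [DecidableEq G]
    (τ : G → G → kˣ) (f : G × Bool → k) : (G × Bool) × (G × Bool) → k :=
  fun p => ∑ v : G × Bool, Dcoef τ v p.1 p.2 * f v

/-- `(Δ ⊗ id)(R) ∈ H^{⊗3}`. -/
def DelIdK {k G : Type*} [Field k] [CommGroup G] [Fintype G] [DecidableEq G]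
    (τ : G → G → kˣ) (R : (G × Bool) × (G × Bool) → k) :
    (G × Bool) × (G × Bool) × (G × Bool) → k :=
  fun t => ∑ v : G × Bool, Dcoef τ v t.1 t.2.1 * R (v, t.2.2)

/-- `(id ⊗ Δ)(R) ∈ H^{⊗3}`. -/
def IdDelK {k G : Type*} [Field k] [CommGroup G] [Fintype G] [DecidableEq G]
    (τ : G → G → kˣ) (R : (G × Bool) × (G × Bool) → k) :
    (G × Bool) × (G × Bool) × (G × Bool) → k :=
  fun t => ∑ v : G × Bool, Dcoef τ v t.2.1 t.2.2 * R (t.1, v)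

/-- `R₁₃ ∈ H^{⊗3}`. -/
def R13K {k G : Type*} [Field k] (R : (G × Bool) × (G × Bool) → k) :
    (G × Bool) × (G × Bool) × (G × Bool) → k :=
  fun v => R (v.1, v.2.2) * (oneHK v.2.1 : k)

/-- `R₂₃ ∈ H^{⊗3}`. -/
def R23K {k G : Type*} [Field k] (R : (G × Bool) × (G × Bool) → k) :
    (G × Bool) × (G × Bool) × (G × Bool) → k :=
  fun v => (oneHK v.1 : k) * R (v.2.1, v.2.2)

/-- `R₁₂ ∈ H^{⊗3}`. -/
def R12K {k G : Type*} [Field k] (R : (G × Bool) × (G × Bool) → k) :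
    (G × Bool) × (G × Bool) × (G × Bool) → k :=
  fun v => R (v.1, v.2.1) * (oneHK v.2.2 : k)

set_option linter.unusedSectionVars false

section
variable {k G : Type*} [Field k] [CommGroup G] [Fintype G] [DecidableEq G]
variable (φ : G → G) (σ : G → kˣ) (τ : G → G → kˣ)

/-- Multiplication of `H` on coefficient functions. -/
def mulHK (f g : G × Bool → k) : G × Bool → k :=
  fun v => ∑ u : G × Bool, ∑ w : G × Bool, mcK φ σ u w v * f u * g w

lemma MHf (hinv : ∀ g : G, φ (φ g) = g) (f g : G × Bool → k) (c : G) :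
    mulHK φ σ f g (c, false)
      = f (c,false) * g (c,false) + (σ c : k) * (f (c,true) * g (φ c,true)) := by
  have hflip : ∀ x y : G, (x = φ y) ↔ (φ x = y) := by
    intro x y
    constructor
    · rintro rfl; exact hinv y
    · rintro rfl; exact (hinv x).symm
  simp only [mulHK, Fintype.sum_prod_type, Fintype.sum_bool, mcK, Prod.mk.injEq, ite_and,
    hflip, mul_ite, ite_mul, mul_zero, zero_mul, mul_one, one_mul, if_true, if_false,
    Finset.sum_const_zero, add_zero, zero_add, Finset.sum_ite_eq, Finset.sum_ite_eq',
    Finset.mem_univ, reduceIte]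
  simp [Finset.sum_add_distrib, Finset.sum_ite_eq, Finset.sum_ite_eq']
  ring

lemma MHt (hinv : ∀ g : G, φ (φ g) = g) (f g : G × Bool → k) (c : G) :
    mulHK φ σ f g (c, true)
      = f (c,false) * g (c,true) + f (c,true) * g (φ c,false) := by
  have hflip : ∀ x y : G, (x = φ y) ↔ (φ x = y) := by
    intro x y
    constructor
    · rintro rfl; exact hinv y
    · rintro rfl; exact (hinv x).symm
  simp only [mulHK, Fintype.sum_prod_type, Fintype.sum_bool, mcK, Prod.mk.injEq, ite_and,
    hflip, mul_ite, ite_mul, mul_zero, zero_mul, mul_one, one_mul, if_true, if_false,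
    Finset.sum_const_zero, add_zero, zero_add, Finset.sum_ite_eq, Finset.sum_ite_eq',
    Finset.mem_univ, reduceIte]
  simp [Finset.sum_add_distrib, Finset.sum_ite_eq, Finset.sum_ite_eq']
  ring

lemma mulHK_one (hinv : ∀ g : G, φ (φ g) = g) (f : G × Bool → k) : mulHK φ σ f oneHK = f := by
  funext v
  obtain ⟨c, b⟩ := v
  cases b
  · rw [MHf φ σ hinv]; simp [oneHK]
  · rw [MHt φ σ hinv]; simp [oneHK]

lemma one_mulHK (hinv : ∀ g : G, φ (φ g) = g) (f : G × Bool → k) : mulHK φ σ oneHK f = f := by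
  funext v
  obtain ⟨c, b⟩ := v
  cases b
  · rw [MHf φ σ hinv]; simp [oneHK]
  · rw [MHt φ σ hinv]; simp [oneHK]

lemma zero_mulHK (g : G × Bool → k) : mulHK φ σ (fun _ => (0:k)) g = fun _ => 0 := by
  funext v; simp [mulHK]

lemma mulHK_zero (g : G × Bool → k) : mulHK φ σ g (fun _ => (0:k)) = fun _ => 0 := by
  funext v; simp [mulHK]

lemma mulHK_assoc (hinv : ∀ g : G, φ (φ g) = g) (hσx : ∀ g : G, σ (φ g) = σ g) (f g h : G × Bool → k) :
    mulHK φ σ (mulHK φ σ f g) h = mulHK φ σ f (mulHK φ σ g h) := by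
  funext v
  obtain ⟨c, b⟩ := v
  cases b <;>
    simp only [MHf φ σ hinv, MHt φ σ hinv, hinv, hσx] <;> ring

lemma mulHK_sum_right (hinv : ∀ g : G, φ (φ g) = g) {ι : Type*} (f : G × Bool → k) (s : Finset ι)
    (g : ι → G × Bool → k) (v : G × Bool) :
    mulHK φ σ f (fun y => ∑ j ∈ s, g j y) v = ∑ j ∈ s, mulHK φ σ f (g j) v := by
  obtain ⟨c, b⟩ := v
  cases b <;>
    simp only [MHf φ σ hinv, MHt φ σ hinv, Finset.mul_sum, Finset.sum_mul,
      ← Finset.sum_add_distrib] <;> exact Finset.sum_congr rfl fun j _ => by ring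

lemma mulHK_sum_left (hinv : ∀ g : G, φ (φ g) = g) {ι : Type*} (g : G × Bool → k) (s : Finset ι)
    (f : ι → G × Bool → k) (v : G × Bool) :
    mulHK φ σ (fun y => ∑ j ∈ s, f j y) g v = ∑ j ∈ s, mulHK φ σ (f j) g v := by
  obtain ⟨c, b⟩ := v
  cases b <;>
    simp only [MHf φ σ hinv, MHt φ σ hinv, Finset.mul_sum, Finset.sum_mul,
      ← Finset.sum_add_distrib] <;> exact Finset.sum_congr rfl fun j _ => by ring

lemma mulHK_smul_right (hinv : ∀ g : G, φ (φ g) = g) (f g : G × Bool → k) (c0 : k) (v : G × Bool) :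
    mulHK φ σ f (fun y => c0 * g y) v = c0 * mulHK φ σ f g v := by
  obtain ⟨c, b⟩ := v
  cases b <;> simp only [MHf φ σ hinv, MHt φ σ hinv] <;> ring

lemma mulHK_scal (hinv : ∀ g : G, φ (φ g) = g) (f g : G × Bool → k) (a b : k) (v : G × Bool) :
    mulHK φ σ (fun y => f y * a) (fun y => b * g y) v = a * b * mulHK φ σ f g v := by
  obtain ⟨c, b'⟩ := v
  cases b' <;> simp only [MHf φ σ hinv, MHt φ σ hinv] <;> ring

lemma mulHK_scal' (hinv : ∀ g : G, φ (φ g) = g) (f : G × Bool → k) (a b : k) (v : G × Bool) :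
    mulHK φ σ (fun y => f y * a) (fun y => b * oneHK y) v = a * b * f v := by
  obtain ⟨c, b'⟩ := v
  cases b' <;> simp only [MHf φ σ hinv, MHt φ σ hinv, oneHK] <;> simp <;> ring

lemma sumGB2 (f : (G × Bool) × (G × Bool) → k) :
    ∑ u : (G × Bool) × (G × Bool), f u = ∑ a : G × Bool, ∑ b : G × Bool, f (a, b) := by
  rw [Fintype.sum_prod_type]

lemma sumGB3 (f : (G × Bool) × (G × Bool) × (G × Bool) → k) :
    ∑ u : (G × Bool) × (G × Bool) × (G × Bool), f u
      = ∑ a : G × Bool, ∑ b : G × Bool, ∑ c : G × Bool, f (a, b, c) := by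
  rw [Fintype.sum_prod_type]
  exact Finset.sum_congr rfl fun a _ => by rw [Fintype.sum_prod_type]

lemma D2 (F F' : (G × Bool) × (G × Bool) → k) (v1 v2 : G × Bool) :
    mul2K φ σ F F' (v1, v2)
      = ∑ u1 : G × Bool, ∑ w1 : G × Bool,
          mcK φ σ u1 w1 v1 * mulHK φ σ (fun y => F (u1, y)) (fun y => F' (w1, y)) v2 := by
  simp only [mul2K, mulHK, sumGB2, Finset.mul_sum]
  refine Finset.sum_congr rfl fun u1 _ => ?_
  rw [Finset.sum_comm]
  exact Finset.sum_congr rfl fun w1 _ => Finset.sum_congr rfl fun u2 _ =>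
    Finset.sum_congr rfl fun w2 _ => by ring

lemma mul2K_swap (F F' : (G × Bool) × (G × Bool) → k) (v1 v2 : G × Bool) :
    mul2K φ σ F F' (v1, v2)
      = mul2K φ σ (fun p => F (p.2, p.1)) (fun p => F' (p.2, p.1)) (v2, v1) := by
  simp only [mul2K]
  refine Fintype.sum_equiv (Equiv.prodComm (G × Bool) (G × Bool)) _ _ fun u => ?_
  refine Fintype.sum_equiv (Equiv.prodComm (G × Bool) (G × Bool)) _ _ fun w => ?_
  simp only [Equiv.prodComm_apply, Prod.swap, Prod.fst, Prod.snd]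
  ring

lemma D2' (F F' : (G × Bool) × (G × Bool) → k) (v1 v2 : G × Bool) :
    mul2K φ σ F F' (v1, v2)
      = ∑ u2 : G × Bool, ∑ w2 : G × Bool,
          mcK φ σ u2 w2 v2 * mulHK φ σ (fun y => F (y, u2)) (fun y => F' (y, w2)) v1 := by
  rw [mul2K_swap, D2]

lemma D3 (F F' : (G × Bool) × (G × Bool) × (G × Bool) → k) (v1 v2 v3 : G × Bool) :
    mul3K φ σ F F' (v1, v2, v3)
      = ∑ u1 : G × Bool, ∑ w1 : G × Bool, mcK φ σ u1 w1 v1 *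
          (∑ u2 : G × Bool, ∑ w2 : G × Bool, mcK φ σ u2 w2 v2 *
            mulHK φ σ (fun y => F (u1, u2, y)) (fun y => F' (w1, w2, y)) v3) := by
  simp only [mul3K, mulHK, sumGB3, Finset.mul_sum]
  refine Finset.sum_congr rfl fun u1 _ => ?_
  conv_lhs => enter [2, u2]; rw [Finset.sum_comm]
  rw [Finset.sum_comm]
  refine Finset.sum_congr rfl fun w1 _ => ?_
  refine Finset.sum_congr rfl fun u2 _ => ?_
  rw [Finset.sum_comm]
  refine Finset.sum_congr rfl fun w2 _ => ?_
  exact Finset.sum_congr rfl fun u3 _ => Finset.sum_congr rfl fun w3 _ => by ring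

lemma H1 (hinv : ∀ g : G, φ (φ g) = g) (g : G × Bool → k) (v : G × Bool) :
    (∑ u : G × Bool, ∑ w : G × Bool, mcK φ σ u w v * oneHK u * g w) = g v := by
  have h := congrFun (one_mulHK φ σ hinv g) v
  simpa [mulHK] using h

lemma H2 (hinv : ∀ g : G, φ (φ g) = g) (f : G × Bool → k) (v : G × Bool) :
    (∑ u : G × Bool, ∑ w : G × Bool, mcK φ σ u w v * f u * oneHK w) = f v := by
  have h := congrFun (mulHK_one φ σ hinv f) v
  simpa [mulHK] using h

lemma evalQT1RHS (hinv : ∀ g : G, φ (φ g) = g) (R : (G × Bool) × (G × Bool) → k)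
    (v1 v2 v3 : G × Bool) :
    mul3K φ σ (R13K R) (R23K R) (v1, v2, v3)
      = mulHK φ σ (fun y => R (v1, y)) (fun y => R (v2, y)) v3 := by
  rw [D3]
  have step1 : ∀ u1 u2 w1 w2 : G × Bool,
      mulHK φ σ (fun y => R13K R (u1, u2, y)) (fun y => R23K R (w1, w2, y)) v3
        = oneHK u2 * oneHK w1 * mulHK φ σ (fun y => R (u1, y)) (fun y => R (w2, y)) v3 := by
    intro u1 u2 w1 w2
    exact mulHK_scal φ σ hinv (fun y => R (u1, y)) (fun y => R (w2, y)) (oneHK u2) (oneHK w1) v3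
  simp only [step1]
  have step2 : ∀ u1 w1 : G × Bool,
      (∑ u2 : G × Bool, ∑ w2 : G × Bool, mcK φ σ u2 w2 v2 *
        (oneHK u2 * oneHK w1 * mulHK φ σ (fun y => R (u1, y)) (fun y => R (w2, y)) v3))
      = oneHK w1 * mulHK φ σ (fun y => R (u1, y)) (fun y => R (v2, y)) v3 := by
    intro u1 w1
    calc (∑ u2 : G × Bool, ∑ w2 : G × Bool, mcK φ σ u2 w2 v2 *
        (oneHK u2 * oneHK w1 * mulHK φ σ (fun y => R (u1, y)) (fun y => R (w2, y)) v3))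
        = ∑ u2 : G × Bool, ∑ w2 : G × Bool, mcK φ σ u2 w2 v2 * oneHK u2 *
            ((fun w2 => oneHK w1 * mulHK φ σ (fun y => R (u1, y)) (fun y => R (w2, y)) v3) w2) := by
          exact Finset.sum_congr rfl fun u2 _ => Finset.sum_congr rfl fun w2 _ => by ring
      _ = oneHK w1 * mulHK φ σ (fun y => R (u1, y)) (fun y => R (v2, y)) v3 :=
          H1 φ σ hinv _ v2
  simp only [step2]
  calc (∑ u1 : G × Bool, ∑ w1 : G × Bool, mcK φ σ u1 w1 v1 *
        (oneHK w1 * mulHK φ σ (fun y => R (u1, y)) (fun y => R (v2, y)) v3))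
      = ∑ u1 : G × Bool, ∑ w1 : G × Bool, mcK φ σ u1 w1 v1 *
          ((fun u1 => mulHK φ σ (fun y => R (u1, y)) (fun y => R (v2, y)) v3) u1) * oneHK w1 := by
        exact Finset.sum_congr rfl fun u1 _ => Finset.sum_congr rfl fun w1 _ => by ring
    _ = mulHK φ σ (fun y => R (v1, y)) (fun y => R (v2, y)) v3 := H2 φ σ hinv _ v1

lemma evalQT2RHS (hinv : ∀ g : G, φ (φ g) = g) (R : (G × Bool) × (G × Bool) → k)
    (v1 v2 v3 : G × Bool) :
    mul3K φ σ (R13K R) (R12K R) (v1, v2, v3)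
      = mulHK φ σ (fun y => R (y, v3)) (fun y => R (y, v2)) v1 := by
  rw [D3]
  have step1 : ∀ u1 u2 w1 w2 : G × Bool,
      mulHK φ σ (fun y => R13K R (u1, u2, y)) (fun y => R12K R (w1, w2, y)) v3
        = oneHK u2 * R (w1, w2) * R (u1, v3) := by
    intro u1 u2 w1 w2
    exact mulHK_scal' φ σ hinv (fun y => R (u1, y)) (oneHK u2) (R (w1, w2)) v3
  simp only [step1]
  have step2 : ∀ u1 w1 : G × Bool,
      (∑ u2 : G × Bool, ∑ w2 : G × Bool, mcK φ σ u2 w2 v2 *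
        (oneHK u2 * R (w1, w2) * R (u1, v3)))
      = R (w1, v2) * R (u1, v3) := by
    intro u1 w1
    calc (∑ u2 : G × Bool, ∑ w2 : G × Bool, mcK φ σ u2 w2 v2 *
        (oneHK u2 * R (w1, w2) * R (u1, v3)))
        = ∑ u2 : G × Bool, ∑ w2 : G × Bool, mcK φ σ u2 w2 v2 * oneHK u2 *
            ((fun w2 => R (w1, w2) * R (u1, v3)) w2) := by
          exact Finset.sum_congr rfl fun u2 _ => Finset.sum_congr rfl fun w2 _ => by ring
      _ = R (w1, v2) * R (u1, v3) := H1 φ σ hinv _ v2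
  simp only [step2]
  simp only [mulHK]
  exact Finset.sum_congr rfl fun u1 _ => Finset.sum_congr rfl fun w1 _ => by ring

lemma evalDelId (R : (G × Bool) × (G × Bool) → k) (a b : G) (v3 : G × Bool) (β1 β2 : Bool) :
    DelIdK τ R ((a,β1),(b,β2),v3)
      = if β1 = β2 then (if β1 then (τ a b : k) else 1) * R ((a*b,β1), v3) else 0 := by
  rcases β1 <;> rcases β2 <;>
    simp [DelIdK, Dcoef, Fintype.sum_prod_type, Fintype.sum_bool, ite_and,
      Finset.sum_ite_eq, Finset.sum_ite_eq']

lemma evalIdDel (R : (G × Bool) × (G × Bool) → k) (v1 : G × Bool) (b c : G) (β2 β3 : Bool) :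
    IdDelK τ R (v1,(b,β2),(c,β3))
      = if β2 = β3 then (if β2 then (τ b c : k) else 1) * R (v1, (b*c,β2)) else 0 := by
  rcases β2 <;> rcases β3 <;>
    simp [IdDelK, Dcoef, Fintype.sum_prod_type, Fintype.sum_bool, ite_and,
      Finset.sum_ite_eq, Finset.sum_ite_eq']

lemma DeltaMap_delta (g0 : G) (p : (G × Bool) × (G × Bool)) :
    DeltaMap τ (fun v => if v = (g0,false) then (1:k) else 0) p
      = if p.1.2 = false ∧ p.2.2 = false ∧ p.1.1 * p.2.1 = g0 then 1 else 0 := by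
  simp only [DeltaMap, mul_ite, mul_one, mul_zero, Finset.sum_ite_eq', Finset.mem_univ,
    if_true]
  rfl

lemma mySumCollapse (p : G → Prop) [DecidablePred p] (a : G) (f : G → k) :
    (∑ x : G, if p x then if a = x then f x else 0 else 0) = if p a then f a else 0 := by
  have h : ∀ x : G, (if p x then if a = x then f x else 0 else 0)
      = if a = x then (if p x then f x else 0) else 0 := by
    intro x; split_ifs <;> rfl
  simp only [h, Finset.sum_ite_eq, Finset.mem_univ, if_true]

lemma evalQT3L (hinv : ∀ g : G, φ (φ g) = g) (R : (G × Bool) × (G × Bool) → k)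
    (g0 m1 m2 : G) (β1 β2 : Bool) :
    mul2K φ σ (fun p => DeltaMap τ (fun v => if v = (g0,false) then (1:k) else 0) (p.2, p.1)) R
        ((m1,β1),(m2,β2))
      = if m2 * m1 = g0 then R ((m1,β1),(m2,β2)) else 0 := by
  have hflip : ∀ x y : G, (x = φ y) ↔ (φ x = y) := by
    intro x y
    constructor
    · rintro rfl; exact hinv y
    · rintro rfl; exact (hinv x).symm
  rw [D2]
  simp only [DeltaMap_delta]
  rcases β1 <;> rcases β2 <;>
    (simp only [MHf φ σ hinv, MHt φ σ hinv] <;>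
     simp [mcK, Fintype.sum_prod_type, Fintype.sum_bool, Prod.mk.injEq, ite_and, hflip,
       mul_ite, ite_mul, mul_zero, zero_mul, mul_one, one_mul,
       Finset.sum_add_distrib, Finset.sum_ite_eq, Finset.sum_ite_eq'] <;>
     simp [mySumCollapse])

lemma evalQT3R (hinv : ∀ g : G, φ (φ g) = g) (R : (G × Bool) × (G × Bool) → k)
    (g0 m1 m2 : G) (β1 β2 : Bool) :
    mul2K φ σ R (DeltaMap τ (fun v => if v = (g0,false) then (1:k) else 0))
        ((m1,β1),(m2,β2))
      = if (if β1 then φ m1 else m1) * (if β2 then φ m2 else m2) = g0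
          then R ((m1,β1),(m2,β2)) else 0 := by
  have hflip : ∀ x y : G, (x = φ y) ↔ (φ x = y) := by
    intro x y
    constructor
    · rintro rfl; exact hinv y
    · rintro rfl; exact (hinv x).symm
  rw [D2]
  simp only [DeltaMap_delta]
  rcases β1 <;> rcases β2 <;>
    (simp only [MHf φ σ hinv, MHt φ σ hinv] <;>
     simp [mcK, Fintype.sum_prod_type, Fintype.sum_bool, Prod.mk.injEq, ite_and, hflip,
       mul_ite, ite_mul, mul_zero, zero_mul, mul_one, one_mul,
       Finset.sum_add_distrib, Finset.sum_ite_eq, Finset.sum_ite_eq'] <;>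
     simp [mySumCollapse])

lemma mulHK_smul_left (hinv : ∀ g : G, φ (φ g) = g) (f g : G × Bool → k) (c0 : k) (v : G × Bool) :
    mulHK φ σ (fun y => c0 * f y) g v = c0 * mulHK φ σ f g v := by
  obtain ⟨c, b⟩ := v
  cases b <;> simp only [MHf φ σ hinv, MHt φ σ hinv] <;> ring

end

/-- Let `H = k^G #_{σ,τ} kZ₂` with `|G|` odd.  Then every quasitriangular structure
(universal `R`-matrix) on `H` is of trivial form `R = ∑ w(g,h) e_g ⊗ e_h`. -/
theorem odd_order_R_trivial {k G : Type*} [Field k] [CommGroup G] [Fintype G]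
    [DecidableEq G] (φ : G → G)
    (hhom : ∀ g h : G, φ (g * h) = φ g * φ h) (hinv : ∀ g : G, φ (φ g) = g)
    (hne : φ ≠ id)
    (σ : G → kˣ) (τ : G → G → kˣ)
    (hcoc : ∀ g h l : G, τ g h * τ (g * h) l = τ h l * τ g (h * l))
    (hτ1 : ∀ g : G, τ g 1 = 1) (hτ1' : ∀ g : G, τ 1 g = 1)
    (hσ1 : σ 1 = 1) (hσx : ∀ g : G, σ (φ g) = σ g)
    (hcompat : ∀ g h : G, σ (g * h) * (σ g)⁻¹ * (σ h)⁻¹ = τ g h * τ (φ g) (φ h))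
    (hodd : Odd (Fintype.card G))
    (R : (G × Bool) × (G × Bool) → k)
    (hR : ∃ R' : (G × Bool) × (G × Bool) → k,
      mul2K φ σ R R' = one2K ∧ mul2K φ σ R' R = one2K)
    (hQT1 : DelIdK τ R = mul3K φ σ (R13K R) (R23K R))
    (hQT2 : IdDelK τ R = mul3K φ σ (R13K R) (R12K R))
    (hQT3 : ∀ f : G × Bool → k,
      mul2K φ σ (fun p => DeltaMap τ f (p.2, p.1)) R = mul2K φ σ R (DeltaMap τ f)) :
    ∃ w : G → G → k, ∀ p : (G × Bool) × (G × Bool),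
      R p = if p.1.2 = false ∧ p.2.2 = false then w p.1.1 p.2.1 else 0 := by
  classical
  obtain ⟨R', hRR', hR'R⟩ := hR
  have hφ1 : φ 1 = 1 := by
    have h : φ 1 * φ 1 = φ 1 := by rw [← hhom 1 1, mul_one]
    have h2 : φ 1 * φ 1 = φ 1 * 1 := by rw [h, mul_one]
    exact mul_left_cancel h2
  -- componentwise quasitriangularity equations
  have EQ1 : ∀ (a b : G) (β1 β2 : Bool) (v3 : G × Bool),
      (if β1 = β2 then (if β1 then (τ a b : k) else 1) * R ((a*b,β1), v3) else 0)
        = mulHK φ σ (fun y => R ((a,β1), y)) (fun y => R ((b,β2), y)) v3 := by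
    intro a b β1 β2 v3
    rw [← evalDelId (τ := τ) R a b v3 β1 β2]
    exact (congrFun hQT1 ((a,β1),(b,β2),v3)).trans (evalQT1RHS φ σ hinv R (a,β1) (b,β2) v3)
  have EQ2 : ∀ (v1 : G × Bool) (b c : G) (β2 β3 : Bool),
      (if β2 = β3 then (if β2 then (τ b c : k) else 1) * R (v1, (b*c,β2)) else 0)
        = mulHK φ σ (fun y => R (y, (c,β3))) (fun y => R (y, (b,β2))) v1 := by
    intro v1 b c β2 β3
    rw [← evalIdDel (τ := τ) R v1 b c β2 β3]
    exact (congrFun hQT2 (v1,(b,β2),(c,β3))).trans (evalQT2RHS φ σ hinv R v1 (b,β2) (c,β3))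
  -- support conditions from hQT3
  have Sup : ∀ (m1 m2 : G) (β1 β2 : Bool), R ((m1,β1),(m2,β2)) ≠ 0 →
      (if β1 then φ m1 else m1) * (if β2 then φ m2 else m2) = m1 * m2 := by
    intro m1 m2 β1 β2 hne0
    have h := congrFun (hQT3 (fun v => if v = (m1*m2,false) then (1:k) else 0)) ((m1,β1),(m2,β2))
    rw [evalQT3L φ σ τ hinv, evalQT3R φ σ τ hinv] at h
    rw [if_pos (mul_comm m2 m1)] at h
    by_contra hcond
    rw [if_neg hcond] at h
    exact hne0 h
  have S1 : ∀ m1 m2 : G, R ((m1,false),(m2,true)) ≠ 0 → φ m2 = m2 := by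
    intro m1 m2 h0
    have h := Sup m1 m2 false true h0
    simp only [if_neg Bool.false_ne_true, if_pos rfl] at h
    exact mul_left_cancel h
  have S3t : ∀ m2 : G, R ((1,true),(m2,true)) ≠ 0 → φ m2 = m2 := by
    intro m2 h0
    have h := Sup 1 m2 true true h0
    simpa [hφ1] using h
  -- invertibility : second-leg unit relations
  have hsANN : ∀ v1 : G × Bool,
      mulHK φ σ (fun y => (if y.2 then (0:k) else 1) - R ((1,false),y) - R ((1,true),y))
        (fun y => R (v1, y)) = fun _ => (0:k) := by
    rintro ⟨b, γ⟩
    funext v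
    obtain ⟨c, δ⟩ := v
    have e1 := EQ1 1 b false γ (c,δ)
    have e2 := EQ1 1 b true γ (c,δ)
    rw [one_mul] at e1 e2
    rcases γ <;> rcases δ <;>
      (simp only [MHf φ σ hinv, MHt φ σ hinv] at e1 e2 ⊢;
       simp only [Bool.false_eq_true, Bool.true_eq_false, if_false, if_true,
         eq_self_iff_true, hτ1', Units.val_one, one_mul, zero_mul, mul_zero] at e1 e2 ⊢;
       linear_combination e1 + e2)
  have honefun : (fun y => mul2K φ σ R R' ((1,false), y)) = (oneHK : G × Bool → k) := by
    funext y
    rw [hRR']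
    simp [one2K, oneHK]
  have hS0 : ∀ y : G × Bool,
      ((if y.2 then (0:k) else 1) - R ((1,false),y) - R ((1,true),y)) = 0 := by
    intro v2
    have base : mulHK φ σ
        (fun y => (if y.2 then (0:k) else 1) - R ((1,false),y) - R ((1,true),y))
        (fun y => mul2K φ σ R R' ((1,false), y)) v2 = 0 := by
      simp only [D2 φ σ R R']
      rw [mulHK_sum_right φ σ hinv]
      refine Finset.sum_eq_zero fun u1 _ => ?_
      rw [mulHK_sum_right φ σ hinv]
      refine Finset.sum_eq_zero fun w1 _ => ?_
      rw [mulHK_smul_right φ σ hinv]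
      rw [← mulHK_assoc φ σ hinv hσx]
      rw [hsANN u1, zero_mulHK]
      simp
    rw [honefun, mulHK_one φ σ hinv] at base
    exact base
  have U1 : ∀ c : G, R ((1,true),(c,false)) = 1 - R ((1,false),(c,false)) := by
    intro c
    have h := hS0 (c,false)
    simp only [Bool.false_eq_true, Bool.true_eq_false, if_false, if_true, eq_self_iff_true] at h
    linear_combination -h
  have U2 : ∀ c : G, R ((1,true),(c,true)) = - R ((1,false),(c,true)) := by
    intro c
    have h := hS0 (c,true)
    simp only [Bool.false_eq_true, Bool.true_eq_false, if_false, if_true, eq_self_iff_true] at h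
    linear_combination -h
  -- invertibility : first-leg unit relations
  have hs'ANN : ∀ v2 : G × Bool,
      mulHK φ σ (fun y => R (y, v2))
        (fun y => (if y.2 then (0:k) else 1) - R (y,(1,false)) - R (y,(1,true)))
        = fun _ => (0:k) := by
    rintro ⟨c, δ⟩
    funext v
    obtain ⟨b, γ⟩ := v
    have f1 := EQ2 (b,γ) 1 c false δ
    have f2 := EQ2 (b,γ) 1 c true δ
    rw [one_mul] at f1 f2
    rcases γ <;> rcases δ <;>
      (simp only [MHf φ σ hinv, MHt φ σ hinv] at f1 f2 ⊢;
       simp only [Bool.false_eq_true, Bool.true_eq_false, if_false, if_true,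
         eq_self_iff_true, hτ1', Units.val_one, one_mul, zero_mul, mul_zero] at f1 f2 ⊢;
       linear_combination f1 + f2)
  have honefun' : (fun y => mul2K φ σ R' R (y, ((1:G),false))) = (oneHK : G × Bool → k) := by
    funext y
    rw [hR'R]
    simp [one2K, oneHK, mul_comm]
  have hS'0 : ∀ y : G × Bool,
      ((if y.2 then (0:k) else 1) - R (y,(1,false)) - R (y,(1,true))) = 0 := by
    intro v1
    have base : mulHK φ σ
        (fun y => mul2K φ σ R' R (y, ((1:G),false)))
        (fun y => (if y.2 then (0:k) else 1) - R (y,(1,false)) - R (y,(1,true))) v1 = 0 := by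
      simp only [D2' φ σ R' R]
      rw [mulHK_sum_left φ σ hinv]
      refine Finset.sum_eq_zero fun u2 _ => ?_
      rw [mulHK_sum_left φ σ hinv]
      refine Finset.sum_eq_zero fun w2 _ => ?_
      rw [mulHK_smul_left φ σ hinv]
      rw [mulHK_assoc φ σ hinv hσx]
      rw [hs'ANN w2, mulHK_zero]
      simp
    rw [honefun', one_mulHK φ σ hinv] at base
    exact base
  have U3 : ∀ a : G, R ((a,false),((1:G),false)) = 1 - R ((a,false),((1:G),true)) := by
    intro a
    have h := hS'0 (a,false)
    simp only [Bool.false_eq_true, Bool.true_eq_false, if_false, if_true, eq_self_iff_true] at h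
    linear_combination -h
  -- the element delta(c) = R((1,x),(c,x)) vanishes
  have hE311 : ∀ c : G, R (((1:G),true),(c,false))
      = R ((1,true),(c,false)) * R ((1,true),(c,false))
        + (σ c : k) * (R ((1,true),(c,true)) * R ((1,true),(φ c,true))) := by
    intro c
    have h := EQ1 1 1 true true (c,false)
    rw [MHf φ σ hinv] at h
    simpa [hτ1] using h
  have hδ0 : ∀ c : G, R (((1:G),true),(c,true)) = 0 := by
    by_contra hcon
    push_neg at hcon
    obtain ⟨c0, hc0⟩ := hcon
    have h2 : ∀ b : G, 1 - 2 * R (((1:G),true),(b,false)) = 0 := by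
      intro b
      have h := EQ2 ((1:G),true) b c0 false true
      rw [MHt φ σ hinv] at h
      rw [hφ1] at h
      simp only [Bool.false_eq_true, Bool.true_eq_false, if_false, if_true, eq_self_iff_true] at h
      have hmul : R ((1,true),(c0,true)) * (1 - 2 * R (((1:G),true),(b,false))) = 0 := by
        have hu2 := U2 c0
        have hu1 := U1 b
        linear_combination -h - R (((1:G),true),(b,false)) * hu2
          - R (((1:G),true),(c0,true)) * hu1
      rcases mul_eq_zero.mp hmul with h' | h'
      · exact absurd h' hc0
      · exact h'
    have hall : ∀ c : G, R (((1:G),true),(c,true)) ≠ 0 := by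
      intro c hzero
      have hidem : R (((1:G),true),(c,false)) * R ((1,true),(c,false))
          = R ((1,true),(c,false)) := by
        have h := hE311 c
        rw [hzero] at h
        simp only [zero_mul, mul_zero, add_zero] at h
        linear_combination -h
      have hb := h2 c
      have hzero1 : (1:k) = 0 := by
        linear_combination (1 - 2 * R (((1:G),true),(c,false))) * hb - 4 * hidem
      exact one_ne_zero hzero1
    exact hne (funext fun c => S3t c (hall c))
  have hB1c : ∀ c : G, R (((1:G),false),(c,true)) = 0 := by
    intro c
    have h := U2 c
    rw [hδ0 c] at h
    linear_combination h
  -- gamma(c) = R((1,x),(c,1)) vanishes (odd order argument)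
  have hγidem : ∀ c : G, R (((1:G),true),(c,false)) * R ((1,true),(c,false))
      = R ((1,true),(c,false)) := by
    intro c
    have h := hE311 c
    rw [hδ0 c] at h
    simp only [zero_mul, mul_zero, add_zero] at h
    linear_combination -h
  have hxor : ∀ b c : G, R (((1:G),true),(b*c,false))
      = (1 - R ((1,true),(c,false))) * R ((1,true),(b,false))
        + R ((1,true),(c,false)) * (1 - R ((1,true),(b,false))) := by
    intro b c
    have h := EQ2 ((1:G),true) b c false false
    rw [MHt φ σ hinv] at h
    rw [hφ1] at h
    simp only [Bool.false_eq_true, Bool.true_eq_false, if_false, if_true, eq_self_iff_true, one_mul] at h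
    have hu1b := U1 b
    have hu1c := U1 c
    linear_combination h + R (((1:G),true),(b,false)) * hu1c
      + R (((1:G),true),(c,false)) * hu1b
  have hγ1 : R (((1:G),true),((1:G),false)) = 0 := by
    have h := hxor 1 1
    rw [mul_one] at h
    have hi := hγidem 1
    linear_combination h - 2 * hi
  have hsq : ∀ c : G, R (((1:G),true),(c*c,false)) = 0 := by
    intro c
    have h := hxor c c
    have hi := hγidem c
    linear_combination h - 2 * hi
  have hoddpow : ∀ (m : ℕ) (c : G),
      R (((1:G),true),(c^(2*m+1),false)) = R ((1,true),(c,false)) := by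
    intro m
    induction m with
    | zero => intro c; norm_num
    | succ n ih =>
      intro c
      have hp : c^(2*(n+1)+1) = c^(2*n+1) * (c*c) := by
        rw [show 2*(n+1)+1 = (2*n+1)+2 by ring, pow_add, pow_two]
      rw [hp, hxor (c^(2*n+1)) (c*c), hsq c, ih c]
      ring
  have hγ0 : ∀ c : G, R (((1:G),true),(c,false)) = 0 := by
    intro c
    obtain ⟨m, hm⟩ := hodd
    have hc : c ^ (2*m+1) = 1 := by rw [← hm]; exact pow_card_eq_one
    have h := hoddpow m c
    rw [hc] at h
    rw [← h, hγ1]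
  -- C = 0 and D = 0
  have hC0 : ∀ b c : G, R ((b,true),(c,false)) = 0 := by
    intro b c
    have h := EQ1 1 b true true (c,false)
    rw [MHf φ σ hinv] at h
    rw [hγ0 c, hδ0 c] at h
    simpa [hτ1'] using h
  have hD0 : ∀ b c : G, R ((b,true),(c,true)) = 0 := by
    intro b c
    have h := EQ1 1 b true true (c,true)
    rw [MHt φ σ hinv] at h
    rw [hγ0 c, hδ0 c] at h
    simpa [hτ1'] using h
  -- B = 0
  have hBzero : ∀ a c : G, R ((a,false),(c,true)) = 0 := by
    intro a c
    by_cases h1 : R ((a,false),((1:G),true)) = 1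
    · exfalso
      have hall : ∀ d : G, R ((a,false),(d,true)) ≠ 0 := by
        intro d h0
        have h := EQ2 (a,false) d d⁻¹ true true
        rw [MHf φ σ hinv] at h
        rw [hD0 a d⁻¹, hD0 (φ a) d] at h
        simp only [Bool.false_eq_true, Bool.true_eq_false, if_false, if_true, eq_self_iff_true, mul_inv_cancel, zero_mul, mul_zero, add_zero] at h
        rw [h1, mul_one, h0, mul_zero] at h
        exact (τ d d⁻¹).ne_zero h
      exact hne (funext fun d => S1 a d (hall d))
    · have h := EQ2 (a,false) 1 c false true
      rw [MHf φ σ hinv] at h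
      rw [one_mul] at h
      rw [hD0 a c] at h
      simp only [Bool.false_eq_true, Bool.true_eq_false, if_false, if_true, eq_self_iff_true, zero_mul, mul_zero, add_zero] at h
      have hu3 := U3 a
      have hz : R ((a,false),(c,true)) * (1 - R ((a,false),((1:G),true))) = 0 := by
        linear_combination -h - R ((a,false),(c,true)) * hu3
      rcases mul_eq_zero.mp hz with h' | h'
      · exact h'
      · exact absurd h' (sub_ne_zero.mpr fun hh => h1 hh.symm)
  refine ⟨fun g h => R ((g,false),(h,false)), ?_⟩
  rintro ⟨⟨g, bg⟩, ⟨h, bh⟩⟩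
  rcases bg <;> rcases bh <;> simp [hBzero, hC0, hD0]
end

section
/- Let H = k^G #_{σ,τ} kZ₂ and suppose R = Σ w(g,h) e_g ⊗ e_h is a (trivial-form) quasitriangular structure on H. Then w is a bicharacter on G and satisfies w(g◁x, h◁x) = w(g,h)·η(g,h), where η(g,h) = τ(g,h)τ(h,g)^{-1}, for all g, h ∈ G. -/
set_option linter.unusedSectionVars false
section Aux
variable {k G : Type*} [Field k] [CommGroup G] [Fintype G] [DecidableEq G]
  (φ : G → G) (σ : G → kˣ)

lemma mcK_false_ne {u : G × Bool} (hu : u.2 = false) {a : G} (h : u.1 ≠ a)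
    (w : G × Bool) : mcK φ σ u w (a, false) = 0 := by
  obtain ⟨g, b⟩ := u
  simp only at hu; subst hu
  obtain ⟨p, bw⟩ := w
  cases bw
  · simp only [mcK]
    rw [if_neg]; rintro ⟨-, h2⟩; exact h (congrArg Prod.fst h2).symm
  · simp only [mcK]
    rw [if_neg]; rintro ⟨-, h2⟩
    exact Bool.false_ne_true (congrArg Prod.snd h2)

lemma mcK_ff_ne {a p : G} (h : p ≠ a) :
    mcK φ σ (a, false) (p, false) (a, false) = 0 := by
  simp only [mcK]
  rw [if_neg]; rintro ⟨h1, -⟩; exact h h1.symm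

lemma mul3K_ff (F F' : (G × Bool) × (G × Bool) × (G × Bool) → k)
    (hF : ∀ t, F t ≠ 0 → t.1.2 = false ∧ t.2.1.2 = false ∧ t.2.2.2 = false)
    (hF' : ∀ t, F' t ≠ 0 → t.1.2 = false ∧ t.2.1.2 = false ∧ t.2.2.2 = false)
    (a c d : G) :
    mul3K φ σ F F' ((a, false), (c, false), (d, false)) =
      F ((a, false), (c, false), (d, false)) * F' ((a, false), (c, false), (d, false)) := by
  unfold mul3K
  rw [Finset.sum_eq_single_of_mem (((a, false), (c, false), (d, false)) :
      (G × Bool) × (G × Bool) × (G × Bool)) (Finset.mem_univ _) ?side1,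
    Finset.sum_eq_single_of_mem (((a, false), (c, false), (d, false)) :
      (G × Bool) × (G × Bool) × (G × Bool)) (Finset.mem_univ _) ?side2]
  · simp [mcK]
  case side2 =>
    intro b _ hb
    by_cases h0 : F' b = 0
    · simp [h0]
    · obtain ⟨e1, e2, e3⟩ := hF' b h0
      obtain ⟨⟨b1, b1b⟩, ⟨b2, b2b⟩, ⟨b3, b3b⟩⟩ := b
      simp only at e1 e2 e3; subst e1; subst e2; subst e3
      have : b1 ≠ a ∨ b2 ≠ c ∨ b3 ≠ d := by
        by_contra hc; push_neg at hc
        exact hb (by simp [hc.1, hc.2.1, hc.2.2])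
      rcases this with h | h | h <;> simp [mcK_ff_ne φ σ h]
  case side1 =>
    intro b _ hb
    apply Finset.sum_eq_zero
    intro x _
    by_cases h0 : F b = 0
    · simp [h0]
    · obtain ⟨e1, e2, e3⟩ := hF b h0
      obtain ⟨⟨b1, b1b⟩, ⟨b2, b2b⟩, ⟨b3, b3b⟩⟩ := b
      simp only at e1 e2 e3; subst e1; subst e2; subst e3
      have : b1 ≠ a ∨ b2 ≠ c ∨ b3 ≠ d := by
        by_contra hc; push_neg at hc
        exact hb (by simp [hc.1, hc.2.1, hc.2.2])
      rcases this with h | h | h <;>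
        simp [mcK_false_ne φ σ (u := (_, false)) rfl h]

end Aux

section Aux2
variable {k G : Type*} [Field k] [CommGroup G] [Fintype G] [DecidableEq G]
  (φ : G → G) (σ : G → kˣ)

-- u.2 = false, u.1 ≠ A  ⟹ mcK u w (A,true) = 0
lemma mcK_ft_ne {u : G × Bool} (hu : u.2 = false) {A : G} (h : u.1 ≠ A)
    (x : G × Bool) : mcK φ σ u x (A, true) = 0 := by
  obtain ⟨g, b⟩ := u; simp only at hu; subst hu
  obtain ⟨p, bw⟩ := x
  cases bw
  · simp only [mcK]
    rw [if_neg]; rintro ⟨-, h2⟩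
    exact Bool.false_ne_true (congrArg Prod.snd h2).symm
  · simp only [mcK]
    rw [if_neg]; rintro ⟨h1, h2⟩
    exact h (h1.trans (congrArg Prod.fst h2).symm)

-- u.2 = true, u.1 ≠ A  ⟹ mcK u x (A,true) = 0
lemma mcK_tt_ne {u : G × Bool} (hu : u.2 = true) {A : G} (h : u.1 ≠ A)
    (x : G × Bool) : mcK φ σ u x (A, true) = 0 := by
  obtain ⟨g, b⟩ := u; simp only at hu; subst hu
  obtain ⟨p, bw⟩ := x
  cases bw
  · simp only [mcK]
    rw [if_neg]; rintro ⟨-, h2⟩; exact h (congrArg Prod.fst h2).symm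
  · simp only [mcK]
    rw [if_neg]; rintro ⟨-, h2⟩
    exact Bool.false_ne_true (congrArg Prod.snd h2).symm

-- x.2 = false, x.1 ≠ φ A ⟹ mcK u x (A,true) = 0   (needs hinv)
lemma mcK_second_ne (hinv : ∀ g : G, φ (φ g) = g) {x : G × Bool} (hx : x.2 = false)
    {A : G} (h : x.1 ≠ φ A) (u : G × Bool) : mcK φ σ u x (A, true) = 0 := by
  obtain ⟨p, bw⟩ := x; simp only at hx; subst hx
  obtain ⟨g, b⟩ := u
  cases b
  · simp only [mcK]
    rw [if_neg]; rintro ⟨-, h2⟩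
    exact Bool.false_ne_true (congrArg Prod.snd h2).symm
  · simp only [mcK]
    rw [if_neg]; rintro ⟨h1, h2⟩
    apply h
    have : g = A := (congrArg Prod.fst h2).symm
    rw [← hinv p, ← h1, this]

-- x.2 = true, x ≠ (A,true) ⟹ mcK u x (A,true) = 0
lemma mcK_second_t_ne {x : G × Bool} (hx : x.2 = true) {A : G} (h : x.1 ≠ A)
    (u : G × Bool) : mcK φ σ u x (A, true) = 0 := by
  obtain ⟨p, bw⟩ := x; simp only at hx; subst hx
  obtain ⟨g, b⟩ := u
  cases b
  · simp only [mcK]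
    rw [if_neg]; rintro ⟨-, h2⟩; exact h (congrArg Prod.fst h2).symm
  · simp only [mcK]
    rw [if_neg]; rintro ⟨-, h2⟩
    exact Bool.false_ne_true (congrArg Prod.snd h2).symm

/-- F supported on (true,true) pairs, F' on (false,false) pairs. -/
lemma mul2K_tf (hinv : ∀ g : G, φ (φ g) = g)
    (F F' : (G × Bool) × (G × Bool) → k)
    (hF : ∀ t, F t ≠ 0 → t.1.2 = true ∧ t.2.2 = true)
    (hF' : ∀ t, F' t ≠ 0 → t.1.2 = false ∧ t.2.2 = false)
    (A C : G) :
    mul2K φ σ F F' ((A, true), (C, true)) =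
      F ((A, true), (C, true)) * F' ((φ A, false), (φ C, false)) := by
  unfold mul2K
  rw [Finset.sum_eq_single_of_mem (((A, true), (C, true)) : (G × Bool) × (G × Bool))
      (Finset.mem_univ _) ?side1,
    Finset.sum_eq_single_of_mem (((φ A, false), (φ C, false)) : (G × Bool) × (G × Bool))
      (Finset.mem_univ _) ?side2]
  · simp [mcK, hinv]
  case side2 =>
    intro b _ hb
    by_cases h0 : F' b = 0
    · simp [h0]
    · obtain ⟨e1, e2⟩ := hF' b h0
      obtain ⟨⟨b1, b1b⟩, ⟨b2, b2b⟩⟩ := b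
      simp only at e1 e2; subst e1; subst e2
      have : b1 ≠ φ A ∨ b2 ≠ φ C := by
        by_contra hc; push_neg at hc; exact hb (by simp [hc.1, hc.2])
      rcases this with h | h <;>
        simp [mcK_second_ne φ σ hinv (x := (_, false)) rfl h]
  case side1 =>
    intro b _ hb
    apply Finset.sum_eq_zero
    intro x _
    by_cases h0 : F b = 0
    · simp [h0]
    · obtain ⟨e1, e2⟩ := hF b h0
      obtain ⟨⟨b1, b1b⟩, ⟨b2, b2b⟩⟩ := b
      simp only at e1 e2; subst e1; subst e2
      have : b1 ≠ A ∨ b2 ≠ C := by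
        by_contra hc; push_neg at hc; exact hb (by simp [hc.1, hc.2])
      rcases this with h | h <;>
        simp [mcK_tt_ne φ σ (u := (_, true)) rfl h]

/-- F supported on (false,false) pairs, F' on (true,true) pairs. -/
lemma mul2K_ft (F F' : (G × Bool) × (G × Bool) → k)
    (hF : ∀ t, F t ≠ 0 → t.1.2 = false ∧ t.2.2 = false)
    (hF' : ∀ t, F' t ≠ 0 → t.1.2 = true ∧ t.2.2 = true)
    (A C : G) :
    mul2K φ σ F F' ((A, true), (C, true)) =
      F ((A, false), (C, false)) * F' ((A, true), (C, true)) := by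
  unfold mul2K
  rw [Finset.sum_eq_single_of_mem (((A, false), (C, false)) : (G × Bool) × (G × Bool))
      (Finset.mem_univ _) ?side1,
    Finset.sum_eq_single_of_mem (((A, true), (C, true)) : (G × Bool) × (G × Bool))
      (Finset.mem_univ _) ?side2]
  · simp [mcK]
  case side2 =>
    intro b _ hb
    by_cases h0 : F' b = 0
    · simp [h0]
    · obtain ⟨e1, e2⟩ := hF' b h0
      obtain ⟨⟨b1, b1b⟩, ⟨b2, b2b⟩⟩ := b
      simp only at e1 e2; subst e1; subst e2
      have : b1 ≠ A ∨ b2 ≠ C := by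
        by_contra hc; push_neg at hc; exact hb (by simp [hc.1, hc.2])
      rcases this with h | h <;>
        simp [mcK_second_t_ne φ σ (x := (_, true)) rfl h]
  case side1 =>
    intro b _ hb
    apply Finset.sum_eq_zero
    intro x _
    by_cases h0 : F b = 0
    · simp [h0]
    · obtain ⟨e1, e2⟩ := hF b h0
      obtain ⟨⟨b1, b1b⟩, ⟨b2, b2b⟩⟩ := b
      simp only at e1 e2; subst e1; subst e2
      have : b1 ≠ A ∨ b2 ≠ C := by
        by_contra hc; push_neg at hc; exact hb (by simp [hc.1, hc.2])
      rcases this with h | h <;>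
        simp [mcK_ft_ne φ σ (u := (_, false)) rfl h]

end Aux2

section Aux3
variable {k G : Type*} [Field k]

lemma R13K_supp (R : (G × Bool) × (G × Bool) → k)
    (hR : ∀ t, R t ≠ 0 → t.1.2 = false ∧ t.2.2 = false) :
    ∀ t, R13K R t ≠ 0 → t.1.2 = false ∧ t.2.1.2 = false ∧ t.2.2.2 = false := by
  intro t ht
  simp only [R13K, oneHK] at ht
  have h1 : R (t.1, t.2.2) ≠ 0 := fun h => ht (by rw [h, zero_mul])
  have h2 : (if t.2.1.2 = false then (1:k) else 0) ≠ 0 := fun h => ht (by rw [h, mul_zero])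
  obtain ⟨a, b⟩ := hR _ h1
  refine ⟨a, ?_, b⟩
  by_contra hc
  rw [if_neg hc] at h2
  exact h2 rfl

lemma R23K_supp (R : (G × Bool) × (G × Bool) → k)
    (hR : ∀ t, R t ≠ 0 → t.1.2 = false ∧ t.2.2 = false) :
    ∀ t, R23K R t ≠ 0 → t.1.2 = false ∧ t.2.1.2 = false ∧ t.2.2.2 = false := by
  intro t ht
  simp only [R23K, oneHK] at ht
  have h1 : R (t.2.1, t.2.2) ≠ 0 := fun h => ht (by rw [h, mul_zero])
  have h2 : (if t.1.2 = false then (1:k) else 0) ≠ 0 := fun h => ht (by rw [h, zero_mul])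
  obtain ⟨a, b⟩ := hR _ h1
  refine ⟨?_, a, b⟩
  by_contra hc
  rw [if_neg hc] at h2
  exact h2 rfl

lemma R12K_supp (R : (G × Bool) × (G × Bool) → k)
    (hR : ∀ t, R t ≠ 0 → t.1.2 = false ∧ t.2.2 = false) :
    ∀ t, R12K R t ≠ 0 → t.1.2 = false ∧ t.2.1.2 = false ∧ t.2.2.2 = false := by
  intro t ht
  simp only [R12K, oneHK] at ht
  have h1 : R (t.1, t.2.1) ≠ 0 := fun h => ht (by rw [h, zero_mul])
  have h2 : (if t.2.2.2 = false then (1:k) else 0) ≠ 0 := fun h => ht (by rw [h, mul_zero])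
  obtain ⟨a, b⟩ := hR _ h1
  exact ⟨a, b, by by_contra hc; rw [if_neg hc] at h2; exact h2 rfl⟩

end Aux3


/-- Suppose `R = ∑ w(g,h) e_g ⊗ e_h` (trivial form) is a quasitriangular structure on
`H = k^G #_{σ,τ} kZ₂`.  Then `w` is a bicharacter on `G` and satisfies
`w(g◁x, h◁x) = w(g,h)·η(g,h)` where `η(g,h) = τ(g,h)τ(h,g)⁻¹`. -/
theorem trivial_R_is_bicharacter {k G : Type*} [Field k] [CommGroup G] [Fintype G]
    [DecidableEq G] (φ : G → G)
    (hhom : ∀ g h : G, φ (g * h) = φ g * φ h) (hinv : ∀ g : G, φ (φ g) = g)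
    (hne : φ ≠ id)
    (σ : G → kˣ) (τ : G → G → kˣ)
    (hcoc : ∀ g h l : G, τ g h * τ (g * h) l = τ h l * τ g (h * l))
    (hτ1 : ∀ g : G, τ g 1 = 1) (hτ1' : ∀ g : G, τ 1 g = 1)
    (hσ1 : σ 1 = 1) (hσx : ∀ g : G, σ (φ g) = σ g)
    (hcompat : ∀ g h : G, σ (g * h) * (σ g)⁻¹ * (σ h)⁻¹ = τ g h * τ (φ g) (φ h))
    (w : G → G → k)
    (R : (G × Bool) × (G × Bool) → k)
    (hRdef : ∀ p : (G × Bool) × (G × Bool),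
      R p = if p.1.2 = false ∧ p.2.2 = false then w p.1.1 p.2.1 else 0)
    (hR : ∃ R' : (G × Bool) × (G × Bool) → k,
      mul2K φ σ R R' = one2K ∧ mul2K φ σ R' R = one2K)
    (hQT1 : DelIdK τ R = mul3K φ σ (R13K R) (R23K R))
    (hQT2 : IdDelK τ R = mul3K φ σ (R13K R) (R12K R))
    (hQT3 : ∀ f : G × Bool → k,
      mul2K φ σ (fun p => DeltaMap τ f (p.2, p.1)) R = mul2K φ σ R (DeltaMap τ f)) :
    (∀ g₁ g₂ h : G, w (g₁ * g₂) h = w g₁ h * w g₂ h) ∧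
    (∀ g h₁ h₂ : G, w g (h₁ * h₂) = w g h₁ * w g h₂) ∧
    (∀ g h : G, w (φ g) (φ h) = w g h * ((τ g h * (τ h g)⁻¹ : kˣ) : k)) := by
  have hRsupp : ∀ t, R t ≠ 0 → t.1.2 = false ∧ t.2.2 = false := by
    intro t ht
    rw [hRdef] at ht
    by_contra hc
    rw [if_neg hc] at ht
    exact ht rfl
  have hs13 := R13K_supp R hRsupp
  have hs23 := R23K_supp R hRsupp
  have hs12 := R12K_supp R hRsupp
  refine ⟨?_, ?_, ?_⟩
  · intro g₁ g₂ h
    have h1 := congrFun hQT1 ((g₁, false), (g₂, false), (h, false))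
    rw [mul3K_ff φ σ _ _ hs13 hs23] at h1
    simp only [DelIdK, Dcoef, hRdef, R13K, R23K, oneHK, Fintype.sum_prod_type,
      Fintype.sum_bool] at h1
    simpa using h1
  · intro g h₁ h₂
    have h1 := congrFun hQT2 ((g, false), (h₁, false), (h₂, false))
    rw [mul3K_ff φ σ _ _ hs13 hs12] at h1
    simp only [IdDelK, Dcoef, hRdef, R13K, R12K, oneHK, Fintype.sum_prod_type,
      Fintype.sum_bool] at h1
    simpa [mul_comm] using h1
  · intro g h
    set f : G × Bool → k := fun p => if p = (g * h, true) then 1 else 0 with hf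
    have hDM : ∀ p : (G × Bool) × (G × Bool),
        DeltaMap τ f p = Dcoef τ (g * h, true) p.1 p.2 := by
      intro p
      unfold DeltaMap
      simp [hf, mul_ite, mul_one, mul_zero, Finset.sum_ite_eq']
    have key := congrFun (hQT3 f) ((g, true), (h, true))
    simp only [hDM] at key
    rw [show DeltaMap τ f = fun p : (G × Bool) × (G × Bool) =>
      Dcoef τ (g * h, true) p.1 p.2 from funext hDM] at key
    have hFl : ∀ t : (G × Bool) × (G × Bool),
        (fun p : (G × Bool) × (G × Bool) => Dcoef τ (g * h, true) p.2 p.1) t ≠ 0 →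
        t.1.2 = true ∧ t.2.2 = true := by
      intro t ht
      simp only [Dcoef] at ht
      split_ifs at ht with h1 h2 h3 <;>
        first
          | exact ⟨h2.2.1, h2.1⟩
          | exact absurd rfl ht
          | exact absurd trivial h1
          | exact absurd ht (not_not_intro rfl)
    have hFr : ∀ t : (G × Bool) × (G × Bool),
        (fun p : (G × Bool) × (G × Bool) => Dcoef τ (g * h, true) p.1 p.2) t ≠ 0 →
        t.1.2 = true ∧ t.2.2 = true := by
      intro t ht
      simp only [Dcoef] at ht
      split_ifs at ht with h1 h2 h3 <;>
        first
          | exact ⟨h2.1, h2.2.1⟩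
          | exact absurd rfl ht
          | exact absurd trivial h1
          | exact absurd ht (not_not_intro rfl)
    rw [mul2K_tf φ σ hinv _ _ hFl hRsupp g h, mul2K_ft φ σ _ _ hRsupp hFr g h] at key
    simp only [Dcoef, hRdef] at key
    simp [mul_comm] at key
    have hne' : ((τ h g : kˣ) : k) ≠ 0 := Units.ne_zero _
    have hval : ((τ g h * (τ h g)⁻¹ : kˣ) : k) = (τ g h : k) * ((τ h g : k))⁻¹ := by
      rw [Units.val_mul, Units.val_inv_eq_inv_val]
    rw [hval]
    field_simp
    linear_combination key
end
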